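/- arXiv:1502.03966 — 6 statements merged into one kernel-verified Lean document; each statement's English description precedes it below -/
import Mathlib

section
/- Let $1<p<N$ and $0\le \mu < \bar\mu = ((N-p)/p)^p$. Then the equation $\gamma^{p-2}[(p-1)\gamma^2-(N-p)\gamma]+\mu=0$ has exactly two roots $\gamma_1,\gamma_2$ in $[0,\infty)$ with $\gamma_1<\gamma_2$, and these satisfy $0\le\gamma_1<\frac{N-p}{p}<\gamma_2\le\frac{N-p}{p-1}$. -/
open Real Set

/-- The root equation `γ^(p-2)[(p-1)γ² - (N-p)γ] + μ = 0` for nonnegative `γ`,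
with `γ^(p-2)` the real power of a nonnegative real. -/
def rootEq (N p μ γ : ℝ) : Prop :=
  γ ^ (p - 2) * ((p - 1) * γ ^ 2 - (N - p) * γ) + μ = 0

theorem two_roots (N p μ : ℝ) (hp : 1 < p) (hpN : p < N)
    (hμ0 : 0 ≤ μ) (hμ : μ < ((N - p) / p) ^ p) :
    ∃ γ₁ γ₂ : ℝ, γ₁ < γ₂ ∧
      0 ≤ γ₁ ∧ γ₁ < (N - p) / p ∧ (N - p) / p < γ₂ ∧ γ₂ ≤ (N - p) / (p - 1) ∧
      rootEq N p μ γ₁ ∧ rootEq N p μ γ₂ ∧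
      ∀ γ : ℝ, 0 ≤ γ → rootEq N p μ γ → γ = γ₁ ∨ γ = γ₂ := by
  have hp0 : (0:ℝ) < p := by linarith
  have hp1 : (0:ℝ) < p - 1 := by linarith
  have hNp : (0:ℝ) < N - p := by linarith
  set c : ℝ := (N - p) / p with hc
  set d : ℝ := (N - p) / (p - 1) with hd
  have hc0 : 0 < c := div_pos hNp hp0
  have hd0 : 0 < d := div_pos hNp hp1
  have hcd : c < d := by
    rw [hc, hd, div_lt_div_iff₀ hp0 hp1]
    nlinarith
  have hNpc : N - p = p * c := by rw [hc]; field_simp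
  have hNpd : N - p = (p - 1) * d := by rw [hd]; field_simp
  set g : ℝ → ℝ := fun x => (p - 1) * x ^ p - (N - p) * x ^ (p - 1) with hg
  -- g agrees with the equation's LHS on nonnegatives
  have hkey : ∀ x : ℝ, 0 ≤ x →
      x ^ (p - 2) * ((p - 1) * x ^ 2 - (N - p) * x) = g x := by
    intro x hx
    rcases hx.eq_or_lt with h | h
    · simp only [hg, ← h]
      rw [Real.zero_rpow hp0.ne', Real.zero_rpow hp1.ne']
      ring
    · have e1 : x ^ (p - 2) * x ^ 2 = x ^ p := by
        have h2 : (x : ℝ) ^ (2 : ℕ) = x ^ (2 : ℝ) := by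
          rw [← Real.rpow_natCast x 2]; norm_num
        rw [h2, ← Real.rpow_add h]
        norm_num
      have e2 : x ^ (p - 2) * x = x ^ (p - 1) := by
        nth_rewrite 2 [← Real.rpow_one x]
        rw [← Real.rpow_add h]
        congr 1
        ring
      have : x ^ (p - 2) * ((p - 1) * x ^ 2 - (N - p) * x)
          = (p - 1) * (x ^ (p - 2) * x ^ 2) - (N - p) * (x ^ (p - 2) * x) := by ring
      rw [this, e1, e2]
  have hiff : ∀ x : ℝ, 0 ≤ x → (rootEq N p μ x ↔ g x = -μ) := by
    intro x hx
    unfold rootEq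
    rw [hkey x hx]
    constructor <;> intro h <;> linarith
  -- values of g
  have hxp1 : ∀ x : ℝ, 0 < x → x ^ p = x ^ (p - 1) * x := by
    intro x hx
    nth_rewrite 1 [show p = (p - 1) + 1 by ring]
    rw [Real.rpow_add hx, Real.rpow_one]
  have hg0 : g 0 = 0 := by
    simp only [hg]
    rw [Real.zero_rpow (by linarith : p ≠ 0), Real.zero_rpow (by linarith : p - 1 ≠ 0)]
    ring
  have hgc : g c = -c ^ p := by
    simp only [hg]
    rw [hxp1 c hc0, hNpc]
    ring
  have hgd : g d = 0 := by
    simp only [hg]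
    rw [hxp1 d hd0, hNpd]
    ring
  have hcp0 : 0 < c ^ p := Real.rpow_pos_of_pos hc0 p
  -- continuity
  have hcont : ContinuousOn g (Ici 0) := by
    apply ContinuousOn.sub
    · exact continuousOn_const.mul fun x _ =>
        (Real.continuousAt_rpow_const x p (Or.inr hp0.le)).continuousWithinAt
    · exact continuousOn_const.mul fun x _ =>
        (Real.continuousAt_rpow_const x (p - 1) (Or.inr hp1.le)).continuousWithinAt
  -- derivative
  have hderiv : ∀ x : ℝ, 0 < x →
      HasDerivAt g ((p - 1) * x ^ (p - 2) * (p * x - (N - p))) x := by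
    intro x hx
    have h1 : HasDerivAt (fun y : ℝ => y ^ p) (p * x ^ (p - 1)) x :=
      Real.hasDerivAt_rpow_const (Or.inl hx.ne')
    have h2 : HasDerivAt (fun y : ℝ => y ^ (p - 1)) ((p - 1) * x ^ (p - 1 - 1)) x :=
      Real.hasDerivAt_rpow_const (Or.inl hx.ne')
    have := (h1.const_mul (p - 1)).sub (h2.const_mul (N - p))
    refine this.congr_deriv ?_
    rw [show p - 1 - 1 = p - 2 by ring, show p - 1 = (p - 2) + 1 by ring,
      Real.rpow_add hx, Real.rpow_one]
    ring
  have hx2pos : ∀ x : ℝ, 0 < x → 0 < x ^ (p - 2) := fun x hx => Real.rpow_pos_of_pos hx _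
  -- strict monotonicity
  have hanti : StrictAntiOn g (Icc 0 c) := by
    apply StrictAntiOn.mono _ (Icc_subset_Icc_right le_rfl)
    apply strictAntiOn_of_deriv_neg (convex_Icc 0 c) (hcont.mono Icc_subset_Ici_self)
    intro x hx
    rw [interior_Icc] at hx
    rw [(hderiv x hx.1).deriv]
    have h1 : p * x - (N - p) < 0 := by rw [hNpc]; nlinarith [hx.2]
    exact mul_neg_of_pos_of_neg (mul_pos hp1 (hx2pos x hx.1)) h1
  have hmono : StrictMonoOn g (Ici c) := by
    apply strictMonoOn_of_deriv_pos (convex_Ici c)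
      (hcont.mono (Ici_subset_Ici.mpr hc0.le))
    intro x hx
    rw [interior_Ici] at hx
    have hcx : c < x := hx
    have hx0 : 0 < x := lt_trans hc0 hcx
    rw [(hderiv x hx0).deriv]
    have h1 : 0 < p * x - (N - p) := by rw [hNpc]; nlinarith
    exact mul_pos (mul_pos hp1 (hx2pos x hx0)) h1
  -- IVT on [0, c]
  have hmem1 : -μ ∈ Icc (g c) (g 0) := by
    rw [hg0, hgc]; constructor <;> linarith
  obtain ⟨γ₁, hγ₁mem, hγ₁⟩ := intermediate_value_Icc' hc0.le
    (hcont.mono (Icc_subset_Ici_self)) hmem1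
  -- IVT on [c, d]
  have hmem2 : -μ ∈ Icc (g c) (g d) := by
    rw [hgd, hgc]; constructor <;> linarith
  obtain ⟨γ₂, hγ₂mem, hγ₂⟩ := intermediate_value_Icc hcd.le
    (hcont.mono (fun x hx => le_trans hc0.le hx.1)) hmem2
  have hγ₁c : γ₁ < c := by
    rcases hγ₁mem.2.eq_or_lt with h | h
    · exfalso; rw [h, hgc] at hγ₁; linarith
    · exact h
  have hγ₂c : c < γ₂ := by
    rcases hγ₂mem.1.eq_or_lt with h | h
    · exfalso; rw [← h, hgc] at hγ₂; linarith
    · exact h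
  refine ⟨γ₁, γ₂, lt_trans hγ₁c hγ₂c, hγ₁mem.1, hγ₁c, hγ₂c, hγ₂mem.2,
    (hiff γ₁ hγ₁mem.1).mpr hγ₁, (hiff γ₂ (le_trans hc0.le hγ₂mem.1)).mpr hγ₂, ?_⟩
  intro γ hγ0 hroot
  have hgγ : g γ = -μ := (hiff γ hγ0).mp hroot
  rcases le_total γ c with h | h
  · left
    exact hanti.injOn ⟨hγ0, h⟩ ⟨hγ₁mem.1, hγ₁mem.2⟩ (by rw [hgγ, hγ₁])
  · right
    exact hmono.injOn h hγ₂mem.1 (by rw [hgγ, hγ₂])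
end

section
/- For every real $p$ with $1<p<2$ there exists a constant $C_p>0$ such that for all vectors $a,b\in\mathbb{R}^N$ with $(a,b)\ne(0,0)$, $|a|^p \ge |b|^p + p|b|^{p-2}\, b\cdot(a-b) + C_p\frac{|a-b|^2}{(|a|+|b|)^{2-p}}$. -/
open Real Set

private lemma my_core (p c T : ℝ) (hp1 : 1 < p) (hp2 : p < 2) (hT : 1 < T)
    (hc0 : 0 ≤ c) (hcb : 2*c ≤ p*(p-1)) (hcK : 2*c*(T-1) ≤ p*(T^(p-1)-1)) :
    ∀ z : ℝ, 0 ≤ z → z ≤ T → c*(z-1)^2 ≤ z^p - 1 - p*(z-1) := by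
  set g : ℝ → ℝ := fun z => z^p - 1 - p*(z-1) - c*(z-1)^2 with hg
  have hderiv : ∀ z : ℝ, HasDerivAt g (p*z^(p-1) - p - c*(2*(z-1))) z := by
    intro z
    have h1 := Real.hasDerivAt_rpow_const (x := z) (p := p) (Or.inr hp1.le)
    have h2 : HasDerivAt (fun z : ℝ => z - 1) 1 z := (hasDerivAt_id z).sub_const 1
    have h3 : HasDerivAt (fun z : ℝ => c*(z-1)^2) (c*(2*(z-1)^1*1)) z := (h2.pow 2).const_mul c
    have h4 : HasDerivAt (fun z : ℝ => p*(z-1)) (p*1) z := h2.const_mul p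
    have := ((h1.sub_const 1).sub h4).sub h3
    exact this.congr_deriv (by ring)
  have hdiff : Differentiable ℝ g := fun z => (hderiv z).differentiableAt
  have hcont : Continuous g := hdiff.continuous
  have hg1 : g 1 = 0 := by simp [hg, Real.one_rpow]
  intro z hz0 hzT
  rcases le_total z 1 with hz1 | hz1
  · have hA : AntitoneOn g (Set.Icc 0 1) := by
      apply antitoneOn_of_deriv_nonpos (convex_Icc 0 1) hcont.continuousOn
        (fun x _ => (hdiff x).differentiableWithinAt)
      intro x hx
      rw [interior_Icc] at hx
      rw [(hderiv x).deriv]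
      have hb : x^(p-1) ≤ 1 + (p-1)*(x-1) := by
        have := rpow_one_add_le_one_add_mul_self (s := x-1) (by linarith [hx.1])
          (by linarith : (0:ℝ) ≤ p - 1) (by linarith : p - 1 ≤ 1)
        rwa [show (1:ℝ) + (x-1) = x by ring] at this
      have hb2 : p * x^(p-1) ≤ p * (1 + (p-1)*(x-1)) :=
        mul_le_mul_of_nonneg_left hb (by linarith)
      have hb3 : 0 ≤ (p*(p-1) - 2*c) * (1 - x) :=
        mul_nonneg (by linarith) (by linarith [hx.2])
      nlinarith [hb2, hb3]
    have h := hA (Set.mem_Icc.2 ⟨hz0, hz1⟩) (Set.mem_Icc.2 ⟨zero_le_one, le_refl 1⟩) hz1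
    rw [hg1] at h
    simp only [hg] at h
    linarith
  · have hM : MonotoneOn g (Set.Icc 1 T) := by
      apply monotoneOn_of_deriv_nonneg (convex_Icc 1 T) hcont.continuousOn
        (fun x _ => (hdiff x).differentiableWithinAt)
      intro x hx
      rw [interior_Icc] at hx
      rw [(hderiv x).deriv]
      have hx1 : (1:ℝ) < x := hx.1
      have hxT : x < T := hx.2
      have hT1ne : T - 1 ≠ 0 := by linarith
      have ha : (0:ℝ) ≤ (T-x)/(T-1) := div_nonneg (by linarith) (by linarith)
      have hbnn : (0:ℝ) ≤ (x-1)/(T-1) := div_nonneg (by linarith) (by linarith)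
      have hab : (T-x)/(T-1) + (x-1)/(T-1) = 1 := by
        rw [← add_div]
        field_simp
        ring
      have hcc := (Real.concaveOn_rpow (by linarith : (0:ℝ) ≤ p-1) (by linarith : p-1 ≤ 1)).2
        (Set.mem_Ici.2 (zero_le_one)) (Set.mem_Ici.2 (by linarith : (0:ℝ) ≤ T)) ha hbnn hab
      simp only [smul_eq_mul, mul_one, Real.one_rpow] at hcc
      rw [show (T-x)/(T-1) + (x-1)/(T-1)*T = x by field_simp; ring] at hcc
      have h' := mul_le_mul_of_nonneg_left hcc (show (0:ℝ) ≤ T-1 by linarith)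
      have e : (T-1)*((T-x)/(T-1) + (x-1)/(T-1)*(T^(p-1))) = (T-x) + (x-1)*T^(p-1) := by
        field_simp
      rw [e] at h'
      -- h' : (T-x) + (x-1)*T^(p-1) ≤ (T-1)*x^(p-1)
      have h1 := mul_le_mul_of_nonneg_left hcK (show (0:ℝ) ≤ x-1 by linarith)
      have h2 := mul_le_mul_of_nonneg_left h' (show (0:ℝ) ≤ p by linarith)
      nlinarith [h1, h2, show (0:ℝ) < T - 1 by linarith]
    have h := hM (Set.mem_Icc.2 ⟨le_refl 1, by linarith⟩) (Set.mem_Icc.2 ⟨hz1, hzT⟩) hz1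
    rw [hg1] at h
    simp only [hg] at h
    linarith


private lemma my_lemA (p : ℝ) (hp1 : 1 < p) (hp2 : p < 2) :
    ∃ C : ℝ, 0 < C ∧ C ≤ 1/8 ∧ ∀ z : ℝ, 0 ≤ z →
      C * (z-1)^2 * (z+1)^(p-2) ≤ z^p - 1 - p*(z-1) := by
  have hq0 : (0:ℝ) < p - 1 := by linarith
  set T := max 2 ((2*p)^(p-1)⁻¹) with hT
  have hT2 : (2:ℝ) ≤ T := le_max_left _ _
  have hT1 : (1:ℝ) < T := by linarith
  have hTq : 2*p ≤ T^(p-1) := by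
    have h0 : (0:ℝ) ≤ 2*p := by linarith
    have h1 : (2*p)^(p-1)⁻¹ ≤ T := le_max_right _ _
    have h2 := Real.rpow_le_rpow (Real.rpow_nonneg h0 _) h1 (le_of_lt hq0)
    rwa [← Real.rpow_mul h0, inv_mul_cancel₀ (ne_of_gt hq0), Real.rpow_one] at h2
  set c := (p/2) * min (p-1) ((T^(p-1) - 1)/(T-1)) with hc
  have hc0 : 0 < c := by
    apply mul_pos (by linarith)
    exact lt_min hq0 (div_pos (by linarith) (by linarith))
  refine ⟨min c (1/8), lt_min hc0 (by norm_num), min_le_right _ _, ?_⟩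
  have hcore := my_core p c T hp1 hp2 hT1 hc0.le
    (by have := min_le_left (p-1) ((T^(p-1) - 1)/(T-1)); nlinarith [min_le_left (p-1) ((T^(p-1) - 1)/(T-1))])
    (by
      have h := min_le_right (p-1) ((T^(p-1) - 1)/(T-1))
      have h2 : c * (T-1) ≤ (p/2) * ((T^(p-1) - 1)/(T-1)) * (T-1) := by
        apply mul_le_mul_of_nonneg_right _ (by linarith)
        rw [hc]
        exact mul_le_mul_of_nonneg_left h (by linarith)
      have hT1ne : T - 1 ≠ 0 := ne_of_gt (by linarith)
      have h3 : (p/2) * ((T^(p-1) - 1)/(T-1)) * (T-1) = (p/2) * (T^(p-1) - 1) := by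
        field_simp
      linarith)
  intro z hz
  rcases le_or_gt z T with hzT | hTz
  · have h1 : (z+1)^(p-2) ≤ 1 := Real.rpow_le_one_of_one_le_of_nonpos (by linarith) (by linarith)
    have h2 := hcore z hz hzT
    have h3 : min c (1/8) * (z-1)^2 * (z+1)^(p-2) ≤ c * (z-1)^2 * 1 := by
      apply mul_le_mul _ h1 (Real.rpow_nonneg (by linarith) _) (by positivity)
      exact mul_le_mul_of_nonneg_right (min_le_left _ _) (sq_nonneg _)
    linarith
  · -- tail z > T ≥ 2
    have hz2 : (2:ℝ) ≤ z := by linarith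
    have hz0' : (0:ℝ) < z := by linarith
    have f1 : (z+1)^(2:ℕ) * (z+1)^(p-2) = (z+1)^p := by
      rw [← Real.rpow_natCast (z+1) 2, ← Real.rpow_add (by linarith)]
      congr 1
      push_cast
      ring
    have f2 : (z+1)^p ≤ (2*z)^p := Real.rpow_le_rpow (by linarith) (by linarith) (by linarith)
    have f3 : (2*z)^p = 2^p * z^p := Real.mul_rpow (by norm_num) hz0'.le
    have f4 : (2:ℝ)^p ≤ 4 := by
      have h := Real.rpow_le_rpow_of_exponent_le (one_le_two) hp2.le
      rwa [show ((2:ℝ)^(2:ℝ)) = 4 by rw [Real.rpow_two]; norm_num] at h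
    have f7 : (0:ℝ) ≤ z^p := Real.rpow_nonneg hz0'.le _
    have f8 : (0:ℝ) ≤ (z+1)^(p-2) := Real.rpow_nonneg (by linarith) _
    have f5 : 2*p ≤ z^(p-1) := by
      have := Real.rpow_le_rpow (by linarith : (0:ℝ) ≤ T) hTz.le (by linarith : (0:ℝ) ≤ p-1)
      linarith
    have f6 : z^(p-1) * z = z^p := by
      rw [← Real.rpow_add_one hz0'.ne']
      congr 1
      ring
    have g1 : min c (1/8)*(z-1)^2*(z+1)^(p-2) ≤ (1/8)*((z+1)^2*(z+1)^(p-2)) := by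
      have hsq : (z-1)^2 ≤ (z+1)^2 := by nlinarith
      calc min c (1/8)*(z-1)^2*(z+1)^(p-2)
          ≤ (1/8)*(z+1)^2*(z+1)^(p-2) := by
            apply mul_le_mul _ le_rfl f8 (by positivity)
            apply mul_le_mul (min_le_right _ _) hsq (sq_nonneg _) (by norm_num)
        _ = (1/8)*((z+1)^2*(z+1)^(p-2)) := by ring
    rw [f1] at g1
    have g2 : (z+1)^p ≤ 4*z^p := by
      rw [f3] at f2
      nlinarith [mul_le_mul_of_nonneg_right f4 f7]
    have g3 : p*z ≤ (1/2)*z^p := by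
      have := mul_le_mul_of_nonneg_right f5 hz0'.le
      rw [f6] at this
      linarith
    linarith


private lemma my_pow_add_le (p x u : ℝ) (hp1 : 1 < p) (hp2 : p < 2) (hx : 0 ≤ x) (hu : 0 ≤ u) :
    (x+u)^p ≤ 4*(x^p + u^p) := by
  have h4 : (2:ℝ)^p ≤ 4 := by
    have h := Real.rpow_le_rpow_of_exponent_le (one_le_two) hp2.le
    rwa [show ((2:ℝ)^(2:ℝ)) = 4 by rw [Real.rpow_two]; norm_num] at h
  rcases le_total x u with hxu | hxu
  · have h1 : (x+u)^p ≤ (2*u)^p := Real.rpow_le_rpow (by linarith) (by linarith) (by linarith)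
    rw [Real.mul_rpow (by norm_num) hu] at h1
    have h2 : (0:ℝ) ≤ u^p := Real.rpow_nonneg hu _
    have h3 : (0:ℝ) ≤ x^p := Real.rpow_nonneg hx _
    nlinarith [mul_le_mul_of_nonneg_right h4 h2]
  · have h1 : (x+u)^p ≤ (2*x)^p := Real.rpow_le_rpow (by linarith) (by linarith) (by linarith)
    rw [Real.mul_rpow (by norm_num) hx] at h1
    have h2 : (0:ℝ) ≤ u^p := Real.rpow_nonneg hu _
    have h3 : (0:ℝ) ≤ x^p := Real.rpow_nonneg hx _
    nlinarith [mul_le_mul_of_nonneg_right h4 h3]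

private lemma my_scalar (p : ℝ) (hp1 : 1 < p) (hp2 : p < 2) :
    ∃ C : ℝ, 0 < C ∧ C ≤ (p-1)/4 ∧ ∀ x y : ℝ, 0 ≤ x → 0 < x + |y| →
      |y|^p + p * |y|^(p-2) * (y * (x - y)) + C * (x-y)^2 * (x+|y|)^(p-2) ≤ x^p := by
  obtain ⟨C₂, hC₂0, hC₂8, hA⟩ := my_lemA p hp1 hp2
  refine ⟨min C₂ ((p-1)/4), lt_min hC₂0 (by linarith), min_le_right _ _, ?_⟩
  set C := min C₂ ((p-1)/4) with hCdef
  have hC0 : 0 < C := lt_min hC₂0 (by linarith)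
  have hCC₂ : C ≤ C₂ := min_le_left _ _
  have hC4 : C ≤ (p-1)/4 := min_le_right _ _
  intro x y hx hxy
  rcases lt_trichotomy y 0 with hy | hy | hy
  · -- y < 0
    set u := -y with hu
    have hu0 : 0 < u := by simp [hu]; linarith
    rw [abs_of_neg hy]
    have hxu : 0 < x + u := by
      have := abs_of_neg hy
      rw [this] at hxy
      exact hxy
    have e1 : (x+u)^(2:ℕ) * (x+u)^(p-2) = (x+u)^p := by
      rw [← Real.rpow_natCast (x+u) 2, ← Real.rpow_add hxu]
      congr 1; push_cast; ring
    have e2 : u^(p-2) * u = u^(p-1) := by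
      rw [← Real.rpow_add_one hu0.ne']
      congr 1; ring
    have e3 : u^(p-1) * u = u^p := by
      rw [← Real.rpow_add_one hu0.ne']
      congr 1; ring
    have h44 := my_pow_add_le p x u hp1 hp2 hx hu0.le
    have hup1 : (0:ℝ) ≤ u^(p-1) := Real.rpow_nonneg hu0.le _
    have hup : (0:ℝ) ≤ u^p := Real.rpow_nonneg hu0.le _
    have hxp : (0:ℝ) ≤ x^p := Real.rpow_nonneg hx _
    have hxup : (0:ℝ) ≤ (x+u)^p := Real.rpow_nonneg hxu.le _
    -- p * u^(p-1) * (x+u) ≥ p * u^p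
    have hmono : u^p ≤ u^(p-1) * (x+u) := by nlinarith [mul_le_mul_of_nonneg_left hx hup1]
    -- C*(x+u)^p ≤ (p-1)/4 * 4 * (x^p + u^p)
    have hCb : C * (x+u)^p ≤ (p-1)*(x^p + u^p) := by
      calc C * (x+u)^p ≤ ((p-1)/4) * (x+u)^p := mul_le_mul_of_nonneg_right hC4 hxup
        _ ≤ ((p-1)/4) * (4*(x^p+u^p)) := mul_le_mul_of_nonneg_left h44 (by linarith)
        _ = (p-1)*(x^p+u^p) := by ring
    have key : u^p + p * u^(p-2) * (y * (x - y)) + C * (x-y)^2 * (x+u)^(p-2) ≤ x^p := by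
      have ey : y * (x - y) = -(u * (x + u)) := by rw [hu]; ring
      have exy : (x - y)^2 = (x+u)^2 := by rw [hu]; ring
      rw [ey, exy]
      have t1 : p * u^(p-2) * (-(u*(x+u))) = -(p * (u^(p-1) * (x+u))) := by
        rw [← e2]; ring
      rw [t1]
      have t2 : C * (x+u)^2 * (x+u)^(p-2) = C * (x+u)^p := by rw [← e1]; ring
      rw [t2]
      have hpmono : p * u^p ≤ p * (u^(p-1)*(x+u)) := mul_le_mul_of_nonneg_left hmono (by linarith)
      nlinarith [hCb, hpmono, hxp]
    exact key
  · -- y = 0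
    subst hy
    simp only [abs_zero, sub_zero, add_zero, zero_mul, mul_zero, zero_add]
    rw [Real.zero_rpow (by linarith : p ≠ 0)]
    have hx0 : 0 < x := by simpa using hxy
    have e1 : x^(2:ℕ) * x^(p-2) = x^p := by
      rw [← Real.rpow_natCast x 2, ← Real.rpow_add hx0]
      congr 1; push_cast; ring
    have hxp : (0:ℝ) ≤ x^p := Real.rpow_nonneg hx _
    have : C * x^2 * x^(p-2) = C * x^p := by rw [← e1]; ring
    rw [this]
    nlinarith [hxp]
  · -- y > 0
    rw [abs_of_pos hy]
    have hz : 0 ≤ x / y := div_nonneg hx hy.le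
    have h := hA (x/y) hz
    have hyp : (0:ℝ) < y ^ p := Real.rpow_pos_of_pos hy p
    have h' := mul_le_mul_of_nonneg_right h hyp.le
    have e2 : x/y*y = x := div_mul_cancel₀ x hy.ne'
    have eA : (x/y-1)^2 * (x/y+1)^(p-2) * y^p = (x-y)^2 * (x+y)^(p-2) := by
      have h1 : y ^ p = y^(2:ℕ) * y^(p-2) := by
        rw [← Real.rpow_natCast y 2, ← Real.rpow_add hy]
        congr 1; push_cast; ring
      have h2 : (x/y+1)^(p-2) * y^(p-2) = (x+y)^(p-2) := by
        rw [← Real.mul_rpow (by positivity) hy.le]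
        congr 1
        field_simp
      have h3 : (x/y-1)^2 * y^2 = (x-y)^2 := by
        field_simp
      calc (x/y-1)^2 * (x/y+1)^(p-2) * y^p
          = ((x/y-1)^2*y^2) * ((x/y+1)^(p-2) * y^(p-2)) := by rw [h1]; ring
        _ = (x-y)^2 * (x+y)^(p-2) := by rw [h3, h2]
    have eB : ((x/y)^p - 1 - p*(x/y-1)) * y^p = x^p - y^p - p*(x-y)*y^(p-1) := by
      have h4 : (x/y)^p * y^p = x^p := by
        rw [← Real.mul_rpow (by positivity) hy.le, e2]
      have h5 : y^(p-1) * y = y^p := by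
        rw [← Real.rpow_add_one hy.ne']
        congr 1; ring
      have h6 : (x/y - 1) * y = x - y := by field_simp
      calc ((x/y)^p - 1 - p*(x/y-1))*y^p
          = (x/y)^p*y^p - y^(p-1)*y - p*((x/y-1)*y)*(y^(p-1)) := by rw [← h5]; ring
        _ = x^p - y^p - p*(x-y)*y^(p-1) := by rw [h4, h5, h6]
    have key : C₂ * ((x-y)^2 * (x+y)^(p-2)) ≤ x^p - y^p - p*(x-y)*y^(p-1) := by
      calc C₂ * ((x-y)^2 * (x+y)^(p-2)) = C₂ * (x/y-1)^2 * (x/y+1)^(p-2) * y^p := by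
            rw [← eA]; ring
        _ ≤ ((x/y)^p - 1 - p*(x/y-1)) * y^p := h'
        _ = x^p - y^p - p*(x-y)*y^(p-1) := eB
    have e8 : y^(p-2) * y = y^(p-1) := by
      rw [← Real.rpow_add_one hy.ne']
      congr 1; ring
    have emid : p * y^(p-2) * (y*(x-y)) = p*(x-y)*y^(p-1) := by rw [← e8]; ring
    have hpos : (0:ℝ) ≤ (x-y)^2 * (x+y)^(p-2) :=
      mul_nonneg (sq_nonneg _) (Real.rpow_nonneg (by linarith) _)
    have hCle : C * ((x-y)^2 * (x+y)^(p-2)) ≤ C₂ * ((x-y)^2 * (x+y)^(p-2)) :=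
      mul_le_mul_of_nonneg_right hCC₂ hpos
    rw [emid]
    nlinarith [key, hCle]


open scoped RealInnerProductSpace

theorem elementary_ineq_p_lt_two (p : ℝ) (hp1 : 1 < p) (hp2 : p < 2) :
    ∃ C : ℝ, 0 < C ∧ ∀ (N : ℕ) (a b : EuclideanSpace ℝ (Fin N)),
      (a, b) ≠ (0, 0) →
      ‖a‖ ^ p ≥ ‖b‖ ^ p + p * ‖b‖ ^ (p - 2) * ⟪b, a - b⟫ +
        C * ‖a - b‖ ^ 2 / (‖a‖ + ‖b‖) ^ (2 - p) := by
  obtain ⟨C, hC0, hC4, hsc⟩ := my_scalar p hp1 hp2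
  refine ⟨C, hC0, ?_⟩
  intro N a b hab
  have hp0 : p ≠ 0 := by linarith
  by_cases hb : b = 0
  · subst hb
    have ha : a ≠ 0 := by
      intro h
      exact hab (by rw [h])
    have hs : 0 < ‖a‖ := norm_pos_iff.mpr ha
    simp only [norm_zero, sub_zero, add_zero, inner_zero_left, mul_zero, zero_mul, zero_add,
      Real.zero_rpow hp0]
    have e : C * ‖a‖^2 / ‖a‖^(2-p) = C * ‖a‖^p := by
      rw [← Real.rpow_natCast ‖a‖ 2, div_eq_mul_inv, ← Real.rpow_neg hs.le, mul_assoc,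
        ← Real.rpow_add hs]
      norm_num
    rw [ge_iff_le, e]
    nlinarith [Real.rpow_pos_of_pos hs p]
  · by_cases ha : a = 0
    · subst ha
      have ht : 0 < ‖b‖ := norm_pos_iff.mpr hb
      simp only [norm_zero, zero_sub, norm_neg, inner_neg_right, zero_add,
        real_inner_self_eq_norm_sq, Real.zero_rpow hp0]
      have e1 : ‖b‖^(p-2) * (‖b‖:ℝ)^(2:ℕ) = ‖b‖^p := by
        rw [← Real.rpow_natCast ‖b‖ 2, ← Real.rpow_add ht]
        congr 1
        push_cast
        ring
      have e2 : C * ‖b‖^2 / ‖b‖^(2-p) = C * ‖b‖^p := by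
        rw [← Real.rpow_natCast ‖b‖ 2, div_eq_mul_inv, ← Real.rpow_neg ht.le, mul_assoc,
          ← Real.rpow_add ht]
        norm_num
      rw [ge_iff_le, e2]
      have e3 : p * ‖b‖^(p-2) * (-(‖b‖^2)) = -(p * ‖b‖^p) := by
        rw [← e1]
        ring
      rw [e3]
      have hbp : 0 < ‖b‖^p := Real.rpow_pos_of_pos ht p
      nlinarith [hbp]
    · -- main case : both nonzero
      have hs : 0 < ‖a‖ := norm_pos_iff.mpr ha
      have ht : 0 < ‖b‖ := norm_pos_iff.mpr hb
      have hst : 0 < ‖a‖ + ‖b‖ := by linarith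
      rw [ge_iff_le]
      have eq1 : ⟪b, a - b⟫ = ⟪b, a⟫ - ‖b‖^2 := by
        rw [inner_sub_right, real_inner_self_eq_norm_sq]
      have eq2 : ‖a - b‖^2 = ‖a‖^2 - 2*⟪b, a⟫ + ‖b‖^2 := by
        rw [norm_sub_sq_real, real_inner_comm]
      have eq3 : C * ‖a - b‖^2 / (‖a‖+‖b‖)^(2-p)
          = C * (‖a‖^2 - 2*⟪b, a⟫ + ‖b‖^2) * (‖a‖+‖b‖)^(p-2) := by
        rw [eq2, div_eq_mul_inv, show p - 2 = -(2-p) by ring, Real.rpow_neg hst.le]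
      rw [eq1, eq3]
      have h1 := hsc ‖a‖ ‖b‖ (norm_nonneg a)
        (by rw [abs_of_nonneg (norm_nonneg b)]; linarith)
      rw [abs_of_nonneg (norm_nonneg b)] at h1
      have h2 := hsc ‖a‖ (-‖b‖) (norm_nonneg a)
        (by rw [abs_neg, abs_of_nonneg (norm_nonneg b)]; linarith)
      rw [abs_neg, abs_of_nonneg (norm_nonneg b)] at h2
      have hr1 : ⟪b, a⟫ ≤ ‖a‖ * ‖b‖ := by
        rw [mul_comm]
        exact real_inner_le_norm b a
      have hr2 : -(‖a‖ * ‖b‖) ≤ ⟪b, a⟫ := by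
        have h := abs_real_inner_le_norm b a
        have h' := neg_abs_le (⟪b, a⟫)
        nlinarith [h, h']
      have w1 : 0 ≤ ‖a‖*‖b‖ - ⟪b, a⟫ := by linarith
      have w2 : 0 ≤ ‖a‖*‖b‖ + ⟪b, a⟫ := by linarith
      have k1 := mul_le_mul_of_nonneg_left h1 w2
      have k2 := mul_le_mul_of_nonneg_left h2 w1
      have hstpos : 0 < 2*(‖a‖*‖b‖) := by positivity
      have key : 2*(‖a‖*‖b‖) * (‖b‖^p + p*‖b‖^(p-2)*(⟪b, a⟫ - ‖b‖^2)
            + C*(‖a‖^2 - 2*⟪b, a⟫ + ‖b‖^2)*(‖a‖+‖b‖)^(p-2))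
          ≤ 2*(‖a‖*‖b‖) * (‖a‖^p) := by
        nlinarith [k1, k2]
      have := le_of_mul_le_mul_left key hstpos
      linarith
end

section
/- Let $p\ge2$ and let $u,v$ be positive differentiable functions on a domain $\Omega\subset\mathbb{R}^N$. Then pointwise in $\Omega$, $|\nabla u|^{p-2}\nabla u\cdot\nabla\big(u-\tfrac{v^p}{u^p}u\big)+|\nabla v|^{p-2}\nabla v\cdot\nabla\big(v-\tfrac{u^p}{v^p}v\big)\ \ge\ C_p\,(u^p+v^p)\,|\nabla\log u-\nabla\log v|^p$, where $C_p=\frac{1}{2^{p-1}-1}$. -/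
open scoped RealInnerProductSpace

section AuxAll
variable {E : Type*} [NormedAddCommGroup E] [InnerProductSpace ℝ E]

lemma rpow_helper_mul {s : ℝ} (hs : 0 < s) (x y z : ℝ) (h : x + y = z) :
    s ^ x * s ^ y = s ^ z := by rw [← Real.rpow_add hs, h]

lemma rpow_sub_two_mul {p s : ℝ} (hp : 2 ≤ p) (hs : 0 ≤ s) :
    s ^ (p - 2) * (s * s) = s ^ p := by
  rcases eq_or_lt_of_le hs with h | h
  · simp [← h, Real.zero_rpow (show p ≠ 0 by linarith)]
  · have h2 : s * s = s ^ (2:ℝ) := by rw [Real.rpow_two, pow_two]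
    rw [h2, rpow_helper_mul h (p-2) 2 p (by ring)]

lemma rpow_sub_two_mul_self {p s : ℝ} (hp : 2 ≤ p) (hs : 0 ≤ s) :
    s ^ (p - 2) * s = s ^ (p - 1) := by
  rcases eq_or_lt_of_le hs with h | h
  · simp [← h, Real.zero_rpow (show p - 1 ≠ 0 by linarith)]
  · nth_rewrite 2 [← Real.rpow_one s]
    exact rpow_helper_mul h (p-2) 1 (p-1) (by ring)

/-- First order convexity inequality for `‖·‖^p`. -/
lemma Dq_nonneg {p : ℝ} (hp : 2 ≤ p) (b a : E) :
    0 ≤ ‖a‖ ^ p + (p - 1) * ‖b‖ ^ p - p * ‖b‖ ^ (p - 2) * ⟪b, a⟫ := by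
  have hp0 : (0:ℝ) < p := by linarith
  have hp1 : p - 1 ≠ 0 := by norm_num; linarith
  have f1 : ⟪b, a⟫ ≤ ‖b‖ * ‖a‖ := real_inner_le_norm b a
  have f2 : (0:ℝ) ≤ ‖b‖ ^ (p - 2) := Real.rpow_nonneg (norm_nonneg b) _
  have f3 : ‖b‖ ^ (p - 2) * ‖b‖ = ‖b‖ ^ (p - 1) := rpow_sub_two_mul_self hp (norm_nonneg b)
  have hpq : p.HolderConjugate (p / (p - 1)) :=
    Real.HolderConjugate.conjExponent (by linarith)
  have young := Real.young_inequality_of_nonneg (norm_nonneg a)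
    (Real.rpow_nonneg (norm_nonneg b) (p-1)) hpq
  rw [← Real.rpow_mul (norm_nonneg b), mul_comm (p-1) (p / (p-1)),
    div_mul_cancel₀ _ hp1] at young
  have h5 : p * ‖b‖ ^ (p - 2) * ⟪b, a⟫ ≤ p * ‖b‖ ^ (p - 2) * (‖b‖ * ‖a‖) := by
    apply mul_le_mul_of_nonneg_left f1 (by positivity)
  have h6 : p * ‖b‖ ^ (p - 2) * (‖b‖ * ‖a‖) = p * (‖a‖ * ‖b‖ ^ (p - 1)) := by
    rw [← f3]; ring
  have h7 : p * (‖a‖ * ‖b‖ ^ (p - 1)) ≤ ‖a‖ ^ p + (p - 1) * ‖b‖ ^ p := by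
    calc p * (‖a‖ * ‖b‖ ^ (p - 1))
        ≤ p * (‖a‖ ^ p / p + (‖b‖ ^ p) / (p / (p - 1))) :=
          mul_le_mul_of_nonneg_left young hp0.le
      _ = ‖a‖ ^ p + (p - 1) * ‖b‖ ^ p := by field_simp
  linarith



variable {E : Type*} [NormedAddCommGroup E] [InnerProductSpace ℝ E]

lemma real_superadd {q A B : ℝ} (hq : 1 ≤ q) (hA : 0 ≤ A) (hB : 0 ≤ B) :
    A ^ q + B ^ q ≤ (A + B) ^ q := by
  have h := NNReal.add_rpow_le_rpow_add A.toNNReal B.toNNReal hq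
  have h2 := NNReal.coe_le_coe.2 h
  simpa [NNReal.coe_rpow, Real.coe_toNNReal _ hA, Real.coe_toNNReal _ hB,
    Real.toNNReal_add hA hB] using h2

lemma real_convpow {q A B : ℝ} (hq : 1 ≤ q) (hA : 0 ≤ A) (hB : 0 ≤ B) :
    (A + B) ^ q ≤ 2 ^ (q - 1) * (A ^ q + B ^ q) := by
  have h := NNReal.rpow_add_le_mul_rpow_add_rpow A.toNNReal B.toNNReal hq
  have h2 := NNReal.coe_le_coe.2 h
  simpa [NNReal.coe_rpow, Real.coe_toNNReal _ hA, Real.coe_toNNReal _ hB,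
    Real.toNNReal_add hA hB] using h2

lemma mul_self_rpow_half {p s : ℝ} (hs : 0 ≤ s) : (s * s) ^ (p / 2) = s ^ p := by
  have h2 : s * s = s ^ (2:ℝ) := by rw [Real.rpow_two, pow_two]
  rw [h2, ← Real.rpow_mul hs, show 2*(p/2) = p by ring]

lemma clarkson {p : ℝ} (hp : 2 ≤ p) (x y : E) :
    ‖(2:ℝ)⁻¹ • (x + y)‖ ^ p + ‖(2:ℝ)⁻¹ • (y - x)‖ ^ p ≤ (‖x‖ ^ p + ‖y‖ ^ p) / 2 := by
  have hq : (1:ℝ) ≤ p / 2 := by linarith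
  set s := ‖(2:ℝ)⁻¹ • (x + y)‖ with hs
  set t := ‖(2:ℝ)⁻¹ • (y - x)‖ with ht
  have hpar : s * s + t * t = (‖x‖ * ‖x‖ + ‖y‖ * ‖y‖) / 2 := by
    have h := parallelogram_law_with_norm ℝ x y
    have h1 : s = 2⁻¹ * ‖x + y‖ := by
      rw [hs, norm_smul]; norm_num
    have h2 : t = 2⁻¹ * ‖x - y‖ := by
      rw [ht, norm_smul, norm_sub_rev]; norm_num
    rw [h1, h2]; nlinarith [h]
  have step1 : s ^ p + t ^ p ≤ (s * s + t * t) ^ (p / 2) := by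
    rw [← mul_self_rpow_half (norm_nonneg _), ← mul_self_rpow_half (norm_nonneg _)]
    exact real_superadd hq (mul_self_nonneg s) (mul_self_nonneg t)
  have step2 : ((‖x‖ * ‖x‖ + ‖y‖ * ‖y‖) / 2) ^ (p / 2) ≤ (‖x‖ ^ p + ‖y‖ ^ p) / 2 := by
    have hc := real_convpow hq (mul_self_nonneg ‖x‖) (mul_self_nonneg ‖y‖)
    have hdiv : ((‖x‖ * ‖x‖ + ‖y‖ * ‖y‖) / 2) ^ (p / 2)
        = (‖x‖ * ‖x‖ + ‖y‖ * ‖y‖) ^ (p / 2) / 2 ^ (p / 2) := by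
      rw [Real.div_rpow (by positivity) (by norm_num)]
    have h2p : (2:ℝ) ^ (p / 2 - 1) / 2 ^ (p / 2) = 1 / 2 := by
      rw [Real.rpow_sub (by norm_num : (0:ℝ) < 2)]
      field_simp
      ring
    have h2pos : (0:ℝ) < 2 ^ (p / 2) := Real.rpow_pos_of_pos (by norm_num) _
    rw [hdiv, mul_self_rpow_half (norm_nonneg x), mul_self_rpow_half (norm_nonneg y)] at *
    rw [div_le_iff₀ h2pos] at *
    calc (‖x‖ * ‖x‖ + ‖y‖ * ‖y‖) ^ (p / 2)
        ≤ 2 ^ (p / 2 - 1) * (‖x‖ ^ p + ‖y‖ ^ p) := hc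
      _ = (‖x‖ ^ p + ‖y‖ ^ p) / 2 * 2 ^ (p / 2) := by
          rw [Real.rpow_sub (by norm_num : (0:ℝ) < 2)]
          field_simp
          ring
  calc s ^ p + t ^ p ≤ (s * s + t * t) ^ (p / 2) := step1
    _ = ((‖x‖ * ‖x‖ + ‖y‖ * ‖y‖) / 2) ^ (p / 2) := by rw [hpar]
    _ ≤ (‖x‖ ^ p + ‖y‖ ^ p) / 2 := step2



/-- The deficiency in the first-order convexity inequality for `‖·‖^p`. -/
noncomputable def Dq (p : ℝ) (b a : E) : ℝ :=
  ‖a‖ ^ p + (p - 1) * ‖b‖ ^ p - p * ‖b‖ ^ (p - 2) * ⟪b, a⟫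

lemma norm_mid_sub {b a : E} : (2:ℝ)⁻¹ • (b + a) - b = (2:ℝ)⁻¹ • (a - b) := by
  module

lemma recursion {p : ℝ} (hp : 2 ≤ p) (b a : E) :
    2 * Dq p b ((2:ℝ)⁻¹ • (b + a)) + 2 ^ (1 - p) * ‖a - b‖ ^ p ≤ Dq p b a := by
  set m := (2:ℝ)⁻¹ • (b + a) with hm
  have hcl := clarkson hp b a
  have hsm : ‖(2:ℝ)⁻¹ • (a - b)‖ ^ p = 2 ^ (-p) * ‖a - b‖ ^ p := by
    rw [norm_smul, Real.norm_eq_abs, abs_of_pos (by norm_num : (0:ℝ) < 2⁻¹),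
      Real.mul_rpow (by norm_num) (norm_nonneg _), Real.inv_rpow (by norm_num),
      ← Real.rpow_neg_one, ← Real.rpow_mul (by norm_num : (0:ℝ) ≤ 2)]
    norm_num
  have h2p : (2:ℝ) * 2 ^ (-p) = 2 ^ (1 - p) := by
    nth_rewrite 1 [← Real.rpow_one 2]
    rw [← Real.rpow_add (by norm_num : (0:ℝ) < 2), sub_eq_add_neg]
  have hinner : ⟪b, m⟫ = ‖b‖ * ‖b‖ + 2⁻¹ * (⟪b, a⟫ - ‖b‖ * ‖b‖) := by
    have : m = b + (2:ℝ)⁻¹ • (a - b) := by rw [hm]; module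
    rw [this, inner_add_right, real_inner_smul_right, inner_sub_right,
      real_inner_self_eq_norm_mul_norm]
  have hbp : ‖b‖ ^ (p - 2) * (‖b‖ * ‖b‖) = ‖b‖ ^ p := rpow_sub_two_mul hp (norm_nonneg b)
  rw [← hm] at hcl
  rw [hsm] at hcl
  have h2p' : 2 * (2 ^ (-p) * ‖a - b‖ ^ p) = 2 ^ (1 - p) * ‖a - b‖ ^ p := by
    rw [← h2p]; ring
  have key : 2 * ‖m‖ ^ p + 2 ^ (1 - p) * ‖a - b‖ ^ p ≤ ‖b‖ ^ p + ‖a‖ ^ p := by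
    linarith
  have heq : Dq p b a - 2 * Dq p b m = ‖a‖ ^ p + ‖b‖ ^ p - 2 * ‖m‖ ^ p := by
    unfold Dq
    rw [hinner]
    linear_combination p * hbp
  linarith

lemma induction_rec {p : ℝ} (hp : 2 ≤ p) (k : ℕ) (b a : E) :
    1 / (2 ^ (p - 1) - 1) * (1 - (2 ^ (1 - p)) ^ k) * ‖a - b‖ ^ p ≤ Dq p b a := by
  induction k generalizing b a with
  | zero =>
    simp only [pow_zero, sub_self, mul_zero, zero_mul]
    unfold Dq
    exact Dq_nonneg hp b a
  | succ k ih =>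
    set L := 1 / ((2:ℝ) ^ (p - 1) - 1) with hL
    set r := (2:ℝ) ^ (1 - p) with hr
    set m := (2:ℝ)⁻¹ • (b + a) with hm
    have hrec := recursion hp b a
    have ihm := ih b m
    have hmb : ‖m - b‖ ^ p = 2 ^ (-p) * ‖a - b‖ ^ p := by
      rw [hm, norm_mid_sub, norm_smul, Real.norm_eq_abs,
        abs_of_pos (by norm_num : (0:ℝ) < 2⁻¹),
        Real.mul_rpow (by norm_num) (norm_nonneg _), Real.inv_rpow (by norm_num),
        ← Real.rpow_neg_one, ← Real.rpow_mul (by norm_num : (0:ℝ) ≤ 2)]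
      norm_num
    rw [hmb] at ihm
    have h2p : (2:ℝ) * 2 ^ (-p) = r := by
      rw [hr]
      nth_rewrite 1 [← Real.rpow_one 2]
      rw [← Real.rpow_add (by norm_num : (0:ℝ) < 2), sub_eq_add_neg]
    have hfix : L * r + r = L := by
      have hr2 : r * 2 ^ (p - 1) = 1 := by
        rw [hr, ← Real.rpow_add (by norm_num : (0:ℝ) < 2)]
        norm_num
      have h21 : (2:ℝ) ≤ 2 ^ (p - 1) := by
        calc (2:ℝ) = 2 ^ (1:ℝ) := (Real.rpow_one 2).symm
          _ ≤ 2 ^ (p - 1) := Real.rpow_le_rpow_of_exponent_le (by norm_num) (by linarith)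
      have hden : (2:ℝ) ^ (p - 1) - 1 ≠ 0 := by
        intro h; rw [sub_eq_zero] at h; linarith [h21]
      rw [hL]
      field_simp
      linear_combination hr2
    calc L * (1 - r ^ (k + 1)) * ‖a - b‖ ^ p
        = 2 * (L * (1 - r ^ k) * (2 ^ (-p) * ‖a - b‖ ^ p)) + r * ‖a - b‖ ^ p := by
          rw [pow_succ]
          linear_combination (-(‖a - b‖ ^ p)) * hfix
            + (L * r ^ k * ‖a - b‖ ^ p - L * ‖a - b‖ ^ p) * h2p
      _ ≤ 2 * Dq p b m + r * ‖a - b‖ ^ p := by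
          have := mul_le_mul_of_nonneg_left ihm (by norm_num : (0:ℝ) ≤ 2)
          linarith
      _ ≤ Dq p b a := hrec

lemma key_ineq {p : ℝ} (hp : 2 ≤ p) (b a : E) :
    1 / (2 ^ (p - 1) - 1) * ‖a - b‖ ^ p ≤
      ‖a‖ ^ p + (p - 1) * ‖b‖ ^ p - p * ‖b‖ ^ (p - 2) * ⟪b, a⟫ := by
  set L := 1 / ((2:ℝ) ^ (p - 1) - 1) with hL
  set r := (2:ℝ) ^ (1 - p) with hr
  have hr0 : 0 ≤ r := (Real.rpow_pos_of_pos (by norm_num) _).le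
  have hr1 : r < 1 := by
    rw [hr]
    exact Real.rpow_lt_one_of_one_lt_of_neg (by norm_num) (by linarith)
  have htend : Filter.Tendsto (fun k : ℕ => L * (1 - r ^ k) * ‖a - b‖ ^ p)
      Filter.atTop (nhds (L * (1 - 0) * ‖a - b‖ ^ p)) := by
    exact (((tendsto_pow_atTop_nhds_zero_of_lt_one hr0 hr1).const_sub 1).const_mul L).mul_const _
  have hle := le_of_tendsto htend
    (Filter.Eventually.of_forall (fun k => induction_rec hp k b a))
  simpa [Dq] using hle


section Grad
variable {E : Type*} [NormedAddCommGroup E] [InnerProductSpace ℝ E] [CompleteSpace E]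

lemma gradient_formula (p : ℝ) (hp : 2 ≤ p) (u v : E → ℝ) (x : E)
    (hu : DifferentiableAt ℝ u x) (hv : DifferentiableAt ℝ v x)
    (hux : 0 < u x) (hvx : 0 < v x) :
    gradient (fun y => u y - (v y ^ p / u y ^ p) * u y) x
      = (1 + (p - 1) * (v x ^ p * u x ^ (-p))) • gradient u x
        - (p * v x ^ (p - 1) * u x ^ (1 - p)) • gradient v x := by
  have hgt : ∀ᶠ y in nhds x, 0 < u y :=
    hu.continuousAt (Ioi_mem_nhds hux)
  have heq : (fun y => u y - (v y ^ p / u y ^ p) * u y)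
      =ᶠ[nhds x] (fun y => u y - v y ^ p * u y ^ (1 - p)) := by
    filter_upwards [hgt] with y hy
    rw [Real.rpow_sub hy, Real.rpow_one]
    ring
  have h1 : HasFDerivAt (fun y => v y ^ p) ((p * v x ^ (p - 1)) • fderiv ℝ v x) x :=
    hv.hasFDerivAt.rpow_const (Or.inl hvx.ne')
  have h2 : HasFDerivAt (fun y => u y ^ (1 - p))
      (((1 - p) * u x ^ (1 - p - 1)) • fderiv ℝ u x) x :=
    hu.hasFDerivAt.rpow_const (Or.inl hux.ne')
  have h3 := h1.mul h2
  have h4 := hu.hasFDerivAt.sub h3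
  have h5 := h4.congr_of_eventuallyEq heq
  have h6 : gradient (fun y => u y - (v y ^ p / u y ^ p) * u y) x
      = (InnerProductSpace.toDual ℝ E).symm
        (fderiv ℝ u x -
          (v x ^ p • (((1 - p) * u x ^ (1 - p - 1)) • fderiv ℝ u x)
            + u x ^ (1 - p) • ((p * v x ^ (p - 1)) • fderiv ℝ v x))) := by
    rw [← h5.fderiv]; rfl
  rw [h6, map_sub, map_add, map_smul, map_smul, map_smul, map_smul]
  have hgu : (InnerProductSpace.toDual ℝ E).symm (fderiv ℝ u x) = gradient u x := rfl
  have hgv : (InnerProductSpace.toDual ℝ E).symm (fderiv ℝ v x) = gradient v x := rfl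
  rw [hgu, hgv, show (1:ℝ) - p - 1 = -p by ring]
  match_scalars <;> ring

end Grad

section TermEq
variable {E : Type*} [NormedAddCommGroup E] [InnerProductSpace ℝ E]

lemma term_eq (p : ℝ) (hp : 2 ≤ p) (su sv : ℝ) (hsu : 0 < su) (hsv : 0 < sv) (a b : E) :
    ‖su • a‖ ^ (p - 2) *
        ⟪su • a, (1 + (p - 1) * (sv ^ p * su ^ (-p))) • (su • a)
          - (p * sv ^ (p - 1) * su ^ (1 - p)) • (sv • b)⟫
      = su ^ p * ‖a‖ ^ p + sv ^ p * ((p - 1) * ‖a‖ ^ p - p * ‖a‖ ^ (p - 2) * ⟪a, b⟫) := by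
  have hsup : (0:ℝ) < su ^ p := Real.rpow_pos_of_pos hsu _
  simp only [inner_sub_right, real_inner_smul_right, real_inner_smul_left,
    real_inner_self_eq_norm_mul_norm, norm_smul, Real.norm_eq_abs, abs_of_pos hsu]
  rw [Real.mul_rpow hsu.le (norm_nonneg a)]
  have hsu2 : su ^ (p - 2) = su ^ p / (su * su) := by
    rw [eq_div_iff (by positivity)]
    exact rpow_sub_two_mul hp hsu.le
  have hsun : su ^ (-p) = (su ^ p)⁻¹ := by
    rw [Real.rpow_neg hsu.le]
  have hsu1p : su ^ (1 - p) = su / su ^ p := by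
    rw [Real.rpow_sub hsu, Real.rpow_one]
  have hsv1 : sv ^ (p - 1) = sv ^ p / sv := by
    rw [Real.rpow_sub hsv, Real.rpow_one]
  have hA : ‖a‖ ^ p = ‖a‖ ^ (p - 2) * (‖a‖ * ‖a‖) := (rpow_sub_two_mul hp (norm_nonneg a)).symm
  rw [hsu2, hsun, hsu1p, hsv1, hA]
  field_simp
  ring

end TermEq


theorem pointwise_lemma_p_ge_two (N : ℕ) (p : ℝ) (hp : 2 ≤ p)
    (Ω : Set (EuclideanSpace ℝ (Fin N))) (hΩ : IsOpen Ω)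
    (u v : EuclideanSpace ℝ (Fin N) → ℝ)
    (hu : ∀ x ∈ Ω, DifferentiableAt ℝ u x) (hv : ∀ x ∈ Ω, DifferentiableAt ℝ v x)
    (hupos : ∀ x ∈ Ω, 0 < u x) (hvpos : ∀ x ∈ Ω, 0 < v x)
    (x : EuclideanSpace ℝ (Fin N)) (hx : x ∈ Ω) :
    ‖gradient u x‖ ^ (p - 2) *
        ⟪gradient u x, gradient (fun y => u y - (v y ^ p / u y ^ p) * u y) x⟫ +
      ‖gradient v x‖ ^ (p - 2) *
        ⟪gradient v x, gradient (fun y => v y - (u y ^ p / v y ^ p) * v y) x⟫ ≥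
      (1 / (2 ^ (p - 1) - 1)) * (u x ^ p + v x ^ p) *
        ‖(u x)⁻¹ • gradient u x - (v x)⁻¹ • gradient v x‖ ^ p := by
  have hsu : 0 < u x := hupos x hx
  have hsv : 0 < v x := hvpos x hx
  have hux : DifferentiableAt ℝ u x := hu x hx
  have hvx : DifferentiableAt ℝ v x := hv x hx
  set su := u x with hsu'
  set sv := v x with hsv'
  set a := su⁻¹ • gradient u x with ha'
  set b := sv⁻¹ • gradient v x with hb'
  have ha : gradient u x = su • a := (smul_inv_smul₀ hsu.ne' _).symm
  have hb : gradient v x = sv • b := (smul_inv_smul₀ hsv.ne' _).symm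
  rw [gradient_formula p hp u v x hux hvx hsu hsv,
    gradient_formula p hp v u x hvx hux hsv hsu, ha, hb,
    term_eq p hp su sv hsu hsv a b, term_eq p hp sv su hsv hsu b a]
  have k1 := key_ineq hp b a
  have k2 := key_ineq hp a b
  rw [norm_sub_rev] at k2
  have hsup : (0:ℝ) < su ^ p := Real.rpow_pos_of_pos hsu _
  have hsvp : (0:ℝ) < sv ^ p := Real.rpow_pos_of_pos hsv _
  have k1' := mul_le_mul_of_nonneg_left k1 hsup.le
  have k2' := mul_le_mul_of_nonneg_left k2 hsvp.le
  ring_nf at k1' k2' ⊢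
  linarith [k1', k2']
end AuxAll
end

section
/- Let $p\in(1,2)$ and let $u,v$ be positive differentiable functions on a domain $\Omega\subset\mathbb{R}^N$ with $\nabla\log u\ne\nabla\log v$ at a point. Then at that point, $|\nabla u|^{p-2}\nabla u\cdot\nabla\big(u-\tfrac{v^p}{u^p}u\big)+|\nabla v|^{p-2}\nabla v\cdot\nabla\big(v-\tfrac{u^p}{v^p}v\big)\ \ge\ C_p\,(u^p+v^p)\,\frac{|\nabla\log u-\nabla\log v|^2}{(|\nabla\log u|+|\nabla\log v|)^{2-p}}$ for some constant $C_p>0$ depending only on $p$. -/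
open scoped RealInnerProductSpace

open Real InnerProductSpace

private lemma plt2_scalar_core (p : ℝ) (hp1 : 1 < p) (hp2 : p < 2) {s t : ℝ} (hs : 0 < s)
    (ht : 0 < t) :
    p*(p-1)/2 * (s-t)^2 * (s+t)^(p-2) ≤ s^p + (p-1)*t^p - p*s*t^(p-1) := by
  set K : ℝ := p*(p-1)/2 * (s+t)^(p-2) with hK
  set G : ℝ → ℝ := fun x => x^p - t^p - p*t^(p-1)*(x-t) - K*(x-t)^2 with hG
  set g : ℝ → ℝ := fun x => p*x^(p-1) - p*t^(p-1) - 2*K*(x-t) with hg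
  have hst : 0 < s + t := by linarith
  have hKpos : 0 < K := by
    apply mul_pos (by nlinarith) (rpow_pos_of_pos hst _)
  have hGd : ∀ x : ℝ, 0 < x → HasDerivAt G (g x) x := by
    intro x hx
    have h1 : HasDerivAt (fun y : ℝ => y^p) (p * x^(p-1)) x :=
      Real.hasDerivAt_rpow_const (Or.inl hx.ne')
    have h2 : HasDerivAt (fun y : ℝ => p*t^(p-1)*(y-t)) (p*t^(p-1)) x := by
      simpa using ((hasDerivAt_id x).sub_const t).const_mul (p*t^(p-1))
    have h3 : HasDerivAt (fun y : ℝ => K*(y-t)^2) (K*(2*(x-t))) x := by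
      have := (((hasDerivAt_id x).sub_const t).pow 2).const_mul K
      simpa using this
    have := ((h1.sub_const (t^p)).sub h2).sub h3
    refine HasDerivAt.congr_deriv this ?_
    simp [hg]; ring
  have hgd : ∀ x : ℝ, 0 < x → HasDerivAt g (p*(p-1)*x^(p-2) - 2*K) x := by
    intro x hx
    have h1 : HasDerivAt (fun y : ℝ => y^(p-1)) ((p-1) * x^(p-1-1)) x :=
      Real.hasDerivAt_rpow_const (Or.inl hx.ne')
    have h2 : HasDerivAt (fun y : ℝ => 2*K*(y-t)) (2*K) x := by
      simpa using ((hasDerivAt_id x).sub_const t).const_mul (2*K)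
    have := ((h1.const_mul p).sub_const (p*t^(p-1))).sub h2
    refine HasDerivAt.congr_deriv this ?_
    have : p - 1 - 1 = p - 2 := by ring
    rw [this]; ring
  -- g is monotone on Icc of positives below s+t
  have hgmono : MonotoneOn g (Set.Icc (min s t) (max s t)) := by
    apply monotoneOn_of_deriv_nonneg (convex_Icc _ _)
    · apply ContinuousOn.mono _ (Set.Icc_subset_Ici_self)
      intro x hx
      exact ((hgd x (lt_of_lt_of_le (lt_min hs ht) hx)).continuousAt).continuousWithinAt
    · intro x hx
      rw [interior_Icc] at hx
      exact ((hgd x (lt_trans (lt_min hs ht) hx.1)).differentiableAt).differentiableWithinAt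
    · intro x hx
      rw [interior_Icc] at hx
      have hx0 : 0 < x := lt_trans (lt_min hs ht) hx.1
      rw [(hgd x hx0).deriv]
      have hxle : x ≤ s + t := le_trans hx.2.le (max_le (by linarith) (by linarith))
      have : (s+t)^(p-2) ≤ x^(p-2) := rpow_le_rpow_of_nonpos hx0 hxle (by linarith)
      rw [hK]
      nlinarith [rpow_pos_of_pos hst (p-2)]
  have hgt : g t = 0 := by simp [hg]
  have hGt : G t = 0 := by simp [hG]
  rcases lt_trichotomy s t with h | h | h
  · -- s < t : G antitone on [s,t]
    have hanti : AntitoneOn G (Set.Icc s t) := by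
      apply antitoneOn_of_deriv_nonpos (convex_Icc _ _)
      · intro x hx
        exact ((hGd x (lt_of_lt_of_le hs hx.1)).continuousAt).continuousWithinAt
      · intro x hx
        rw [interior_Icc] at hx
        exact ((hGd x (lt_trans hs hx.1)).differentiableAt).differentiableWithinAt
      · intro x hx
        rw [interior_Icc] at hx
        rw [(hGd x (lt_trans hs hx.1)).deriv]
        have h1 : x ∈ Set.Icc (min s t) (max s t) := by
          constructor
          · exact le_trans (min_le_left _ _) hx.1.le
          · exact le_trans hx.2.le (le_max_right _ _)
        have h2 : t ∈ Set.Icc (min s t) (max s t) := by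
          constructor
          · exact min_le_right _ _
          · exact le_max_right _ _
        have := hgmono h1 h2 hx.2.le
        rw [hgt] at this; exact this
    have := hanti (Set.left_mem_Icc.mpr h.le) (Set.right_mem_Icc.mpr h.le) h.le
    rw [hGt] at this
    -- G s ≥ 0
    have hGs : 0 ≤ G s := this
    rw [hG] at hGs
    simp only at hGs
    have htp : t^(p-1)*t = t^p := by
      nth_rewrite 2 [← Real.rpow_one t]
      rw [← Real.rpow_add ht]; norm_num
    nlinarith [hGs]
  · subst h
    have : s^(p-1)*s = s^p := by
      nth_rewrite 2 [← Real.rpow_one s]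
      rw [← Real.rpow_add hs]; norm_num
    nlinarith
  · -- t < s : G monotone on [t,s]
    have hmono : MonotoneOn G (Set.Icc t s) := by
      apply monotoneOn_of_deriv_nonneg (convex_Icc _ _)
      · intro x hx
        exact ((hGd x (lt_of_lt_of_le ht hx.1)).continuousAt).continuousWithinAt
      · intro x hx
        rw [interior_Icc] at hx
        exact ((hGd x (lt_trans ht hx.1)).differentiableAt).differentiableWithinAt
      · intro x hx
        rw [interior_Icc] at hx
        rw [(hGd x (lt_trans ht hx.1)).deriv]
        have h1 : x ∈ Set.Icc (min s t) (max s t) := by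
          constructor
          · exact le_trans (min_le_right _ _) hx.1.le
          · exact le_trans hx.2.le (le_max_left _ _)
        have h2 : t ∈ Set.Icc (min s t) (max s t) := by
          constructor
          · exact min_le_right _ _
          · exact le_max_right _ _
        have := hgmono h2 h1 hx.1.le
        rw [hgt] at this; exact this
    have := hmono (Set.left_mem_Icc.mpr h.le) (Set.right_mem_Icc.mpr h.le) h.le
    rw [hGt] at this
    have hGs : 0 ≤ G s := this
    rw [hG] at hGs
    simp only at hGs
    have htp : t^(p-1)*t = t^p := by
      nth_rewrite 2 [← Real.rpow_one t]
      rw [← Real.rpow_add ht]; norm_num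
    nlinarith [hGs]

private lemma plt2_scalar_full (p : ℝ) (hp1 : 1 < p) (hp2 : p < 2) {s t : ℝ} (hs : 0 ≤ s)
    (ht : 0 ≤ t) :
    p*(p-1)/2 * (s-t)^2 * (s+t)^(p-2) ≤ s^p + (p-1)*t^p - p*s*t^(p-1) := by
  rcases hs.eq_or_lt with h | hs'
  · subst h
    rcases ht.eq_or_lt with h | ht'
    · subst h
      simp [Real.zero_rpow (by linarith : p ≠ 0)]
    · rw [Real.zero_rpow (by linarith : p ≠ 0)]
      have h1 : (0-t)^2 * t^(p-2) = t^p := by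
        rw [show (0-t)^2 = t^(2:ℝ) by rw [Real.rpow_two]; ring]
        rw [← Real.rpow_add ht']; norm_num
      simp only [zero_add, zero_mul, mul_zero, sub_zero]
      rw [mul_assoc, h1]
      have h2 : 0 < t^p := rpow_pos_of_pos ht' _
      nlinarith [mul_pos (mul_pos (show (0:ℝ) < p-1 by linarith) (show (0:ℝ) < 2-p by linarith)) h2]
  · rcases ht.eq_or_lt with h | ht'
    · subst h
      rw [Real.zero_rpow (by linarith : p ≠ 0), Real.zero_rpow (by linarith : p - 1 ≠ 0)]
      have h1 : (s-0)^2 * (s+0)^(p-2) = s^p := by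
        rw [show (s-0)^2 = s^(2:ℝ) by rw [Real.rpow_two]; ring]
        rw [add_zero, ← Real.rpow_add hs']; norm_num
      rw [mul_assoc, h1]
      have h2 : 0 < s^p := rpow_pos_of_pos hs' _
      nlinarith [mul_pos (mul_pos (show (0:ℝ) < 2-p by linarith) (show (0:ℝ) < p+1 by linarith)) h2]
    · exact plt2_scalar_core p hp1 hp2 hs' ht'

private lemma plt2_vec_ineq (p : ℝ) (hp1 : 1 < p) (hp2 : p < 2) {n : ℕ}
    (a b : EuclideanSpace ℝ (Fin n)) :
    p*(p-1)/2 * ‖a-b‖^2 * (‖a‖+‖b‖)^(p-2) ≤ ‖a‖^p + (p-1)*‖b‖^p - p*‖b‖^(p-2)*⟪a,b⟫ := by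
  rcases eq_or_ne b 0 with hb | hb
  · subst hb
    simp only [inner_zero_right, mul_zero, sub_zero, norm_zero, add_zero]
    rw [Real.zero_rpow (by linarith : p ≠ 0), mul_zero, add_zero]
    have := plt2_scalar_full p hp1 hp2 (norm_nonneg a) (le_refl (0:ℝ))
    rw [Real.zero_rpow (by linarith : p ≠ 0), Real.zero_rpow (by linarith : p - 1 ≠ 0)] at this
    simpa using this
  · set s := ‖a‖ with hsdef
    set t := ‖b‖ with htdef
    have hs : 0 ≤ s := norm_nonneg _
    have ht' : 0 < t := norm_pos_iff.mpr hb
    have hnorm : ‖a-b‖^2 = s^2 - 2*⟪a,b⟫ + t^2 := by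
      rw [norm_sub_sq_real]
    have hσ : ⟪a,b⟫ ≤ s*t := real_inner_le_norm a b
    have hst : 0 < s + t := by linarith
    have hpow : (s+t)^(p-2) ≤ t^(p-2) := rpow_le_rpow_of_nonpos ht' (by linarith) (by linarith)
    have hpowpos : 0 < (s+t)^(p-2) := rpow_pos_of_pos hst _
    have hk : p*(p-1)*(s+t)^(p-2) ≤ p*t^(p-2) := by
      have h1 : p*(p-1)*(s+t)^(p-2) ≤ p*(s+t)^(p-2) := by
        have := mul_le_mul_of_nonneg_right (show p*(p-1) ≤ p by nlinarith) hpowpos.le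
        linarith
      have h2 : p*(s+t)^(p-2) ≤ p*t^(p-2) :=
        mul_le_mul_of_nonneg_left hpow (by linarith)
      linarith
    have hsc := plt2_scalar_full p hp1 hp2 hs ht'.le
    have htp : t^(p-2)*t = t^(p-1) := by
      nth_rewrite 2 [← Real.rpow_one t]
      rw [← Real.rpow_add ht']
      congr 1; ring
    rw [← htp] at hsc
    have hint : 0 ≤ (s*t - ⟪a,b⟫) * (p*t^(p-2) - p*(p-1)*(s+t)^(p-2)) :=
      mul_nonneg (by linarith) (by linarith)
    rw [hnorm]
    nlinarith [hint, hsc]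

private lemma plt2_term_inner (p : ℝ) (hp1 : 1 < p) {n : ℕ} (u v : EuclideanSpace ℝ (Fin n) → ℝ)
    (x : EuclideanSpace ℝ (Fin n))
    (hu : DifferentiableAt ℝ u x) (hv : DifferentiableAt ℝ v x)
    (hU : 0 < u x) (hV : 0 < v x) :
    ⟪gradient u x, gradient (fun y => u y - (v y ^ p / u y ^ p) * u y) x⟫
      = (1 + (p-1) * (v x ^ p) * (u x ^ p)⁻¹) * ‖gradient u x‖^2
        - (p * v x ^ (p-1) * u x * (u x ^ p)⁻¹) * ⟪gradient v x, gradient u x⟫ := by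
  set U := u x with hUdef
  set V := v x with hVdef
  have hUp : (0:ℝ) < U ^ p := rpow_pos_of_pos hU _
  -- replace the function by an eventually-equal one
  have h0 : ∀ᶠ y in nhds x, 0 < u y := hu.continuousAt.eventually (eventually_gt_nhds hU)
  have hev : (fun y => u y - (v y ^ p / u y ^ p) * u y) =ᶠ[nhds x]
      (fun y => u y - v y ^ p * u y ^ (1-p)) := by
    filter_upwards [h0] with y hy
    rw [Real.rpow_sub hy, Real.rpow_one]
    have : u y ^ p ≠ 0 := (rpow_pos_of_pos hy p).ne'
    field_simp
  have hgr : gradient (fun y => u y - (v y ^ p / u y ^ p) * u y) x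
      = gradient (fun y => u y - v y ^ p * u y ^ (1-p)) x := by
    rw [gradient, gradient, hev.fderiv_eq]
  rw [hgr]
  set Du := fderiv ℝ u x with hDu
  set Dv := fderiv ℝ v x with hDv
  have hdu : HasFDerivAt u Du x := hu.hasFDerivAt
  have hdv : HasFDerivAt v Dv x := hv.hasFDerivAt
  have h1 : HasFDerivAt (fun y => v y ^ p) ((p * V ^ (p-1)) • Dv) x :=
    hdv.rpow_const (Or.inl hV.ne')
  have h2 : HasFDerivAt (fun y => u y ^ (1-p)) (((1-p) * U ^ (1-p-1)) • Du) x :=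
    hdu.rpow_const (Or.inl hU.ne')
  have h3 := h1.mul h2
  have h4 := hdu.sub h3
  rw [HasGradientAt.gradient (f := fun y => u y - v y ^ p * u y ^ (1 - p)) h4.hasGradientAt, real_inner_comm, toDual_symm_apply]
  have hgu : ∀ y, Du y = ⟪gradient u x, y⟫ := fun y => (toDual_symm_apply).symm
  have hgv : ∀ y, Dv y = ⟪gradient v x, y⟫ := fun y => (toDual_symm_apply).symm
  simp only [ContinuousLinearMap.coe_sub', ContinuousLinearMap.coe_add',
    ContinuousLinearMap.coe_smul', Pi.sub_apply, Pi.add_apply, Pi.smul_apply,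
    smul_eq_mul]
  rw [hgu, hgv, real_inner_self_eq_norm_sq]
  have e1 : U ^ (1-p-1) = (U ^ p)⁻¹ := by
    rw [show (1:ℝ)-p-1 = -p by ring, Real.rpow_neg hU.le]
  have e2 : U ^ (1-p) = U * (U ^ p)⁻¹ := by
    rw [Real.rpow_sub hU, Real.rpow_one, div_eq_mul_inv]
  rw [e1, e2]
  ring

private lemma plt2_alg_id (p : ℝ) (hp1 : 1 < p) (hp2 : p < 2) {U V s : ℝ} (hU : 0 < U) (hV : 0 < V)
    (hs : 0 ≤ s) (σ : ℝ) :
    (U*s)^(p-2) * ((1 + (p-1)*V^p*(U^p)⁻¹)*(U*s)^2 - (p*V^(p-1)*U*(U^p)⁻¹)*(V*U*σ))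
      = U^p*s^p + V^p*((p-1)*s^p - p*s^(p-2)*σ) := by
  rcases hs.eq_or_lt with h | hs'
  · subst h
    rw [mul_zero, Real.zero_rpow (by linarith : p-2 ≠ 0),
      Real.zero_rpow (by linarith : p ≠ 0)]
    ring
  · have hA : U^(p-2) = U^p / U^2 := by
      rw [eq_div_iff (by positivity), ← Real.rpow_two, ← Real.rpow_add hU]
      norm_num
    have hB : s^(p-2) = s^p / s^2 := by
      rw [eq_div_iff (by positivity), ← Real.rpow_two, ← Real.rpow_add hs']
      norm_num
    have hVp' : V^(p-1) * V = V^p := by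
      nth_rewrite 2 [← Real.rpow_one V]
      rw [← Real.rpow_add hV]
      congr 1; ring
    have hVp : V^(p-1) = V^p / V := by rw [eq_div_iff hV.ne', hVp']
    have hUp : (0:ℝ) < U ^ p := rpow_pos_of_pos hU _
    rw [Real.mul_rpow hU.le hs'.le, hA, hB, hVp]
    field_simp
    ring

set_option maxHeartbeats 1000000 in
theorem pointwise_lemma_p_lt_two (p : ℝ) (hp1 : 1 < p) (hp2 : p < 2) :
    ∃ C : ℝ, 0 < C ∧
    ∀ (N : ℕ) (Ω : Set (EuclideanSpace ℝ (Fin N))), IsOpen Ω →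
    ∀ (u v : EuclideanSpace ℝ (Fin N) → ℝ),
      (∀ x ∈ Ω, DifferentiableAt ℝ u x) → (∀ x ∈ Ω, DifferentiableAt ℝ v x) →
      (∀ x ∈ Ω, 0 < u x) → (∀ x ∈ Ω, 0 < v x) →
      ∀ x ∈ Ω, (u x)⁻¹ • gradient u x ≠ (v x)⁻¹ • gradient v x →
      ‖gradient u x‖ ^ (p - 2) *
          ⟪gradient u x, gradient (fun y => u y - (v y ^ p / u y ^ p) * u y) x⟫ +
        ‖gradient v x‖ ^ (p - 2) *
          ⟪gradient v x, gradient (fun y => v y - (u y ^ p / v y ^ p) * v y) x⟫ ≥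
        C * (u x ^ p + v x ^ p) *
          (‖(u x)⁻¹ • gradient u x - (v x)⁻¹ • gradient v x‖ ^ 2 /
            (‖(u x)⁻¹ • gradient u x‖ + ‖(v x)⁻¹ • gradient v x‖) ^ (2 - p)) := by
  refine ⟨p*(p-1)/2, by nlinarith, ?_⟩
  intro N Ω hΩ u v hu hv hupos hvpos x hx hne
  have hux := hu x hx
  have hvx := hv x hx
  have hU := hupos x hx
  have hV := hvpos x hx
  set U := u x with hUdef
  set V := v x with hVdef
  set a : EuclideanSpace ℝ (Fin N) := U⁻¹ • gradient u x with hadef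
  set b : EuclideanSpace ℝ (Fin N) := V⁻¹ • gradient v x with hbdef
  have hga : gradient u x = U • a := (smul_inv_smul₀ hU.ne' _).symm
  have hgb : gradient v x = V • b := (smul_inv_smul₀ hV.ne' _).symm
  have hna : ‖gradient u x‖ = U * ‖a‖ := by
    rw [hga, norm_smul, Real.norm_of_nonneg hU.le]
  have hnb : ‖gradient v x‖ = V * ‖b‖ := by
    rw [hgb, norm_smul, Real.norm_of_nonneg hV.le]
  have hiuv : ⟪gradient v x, gradient u x⟫ = V * (U * ⟪b, a⟫) := by
    rw [hga, hgb, real_inner_smul_left, real_inner_smul_right]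
  have hivu : ⟪gradient u x, gradient v x⟫ = U * (V * ⟪a, b⟫) := by
    rw [hga, hgb, real_inner_smul_left, real_inner_smul_right]
  -- rewrite the two inner-product terms
  rw [plt2_term_inner p hp1 u v x hux hvx hU hV, plt2_term_inner p hp1 v u x hvx hux hV hU]
  have t1 : ‖gradient u x‖ ^ (p-2) *
      ((1 + (p-1) * (V ^ p) * (U ^ p)⁻¹) * ‖gradient u x‖^2
        - (p * V ^ (p-1) * U * (U ^ p)⁻¹) * ⟪gradient v x, gradient u x⟫)
      = U^p*‖a‖^p + V^p*((p-1)*‖a‖^p - p*‖a‖^(p-2)*⟪b,a⟫) := by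
    rw [hna, hiuv, ← mul_assoc V U]
    exact plt2_alg_id p hp1 hp2 hU hV (norm_nonneg a) ⟪b,a⟫
  have t2 : ‖gradient v x‖ ^ (p-2) *
      ((1 + (p-1) * (U ^ p) * (V ^ p)⁻¹) * ‖gradient v x‖^2
        - (p * U ^ (p-1) * V * (V ^ p)⁻¹) * ⟪gradient u x, gradient v x⟫)
      = V^p*‖b‖^p + U^p*((p-1)*‖b‖^p - p*‖b‖^(p-2)*⟪a,b⟫) := by
    rw [hnb, hivu, ← mul_assoc U V]
    exact plt2_alg_id p hp1 hp2 hV hU (norm_nonneg b) ⟪a,b⟫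
  rw [t1, t2]
  -- positivity facts
  have hUp : (0:ℝ) < U ^ p := rpow_pos_of_pos hU _
  have hVp : (0:ℝ) < V ^ p := rpow_pos_of_pos hV _
  have hab : 0 < ‖a‖ + ‖b‖ := by
    rcases (add_nonneg (norm_nonneg a) (norm_nonneg b)).eq_or_lt with h | h
    · exfalso
      have h1 : ‖a‖ = 0 := by
        have := norm_nonneg a; have := norm_nonneg b; linarith
      have h2 : ‖b‖ = 0 := by
        have := norm_nonneg a; have := norm_nonneg b; linarith
      exact hne (by rw [norm_eq_zero.mp h1, norm_eq_zero.mp h2])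
    · exact h
  -- rewrite the RHS power
  have hdiv : ‖a - b‖ ^ 2 / (‖a‖ + ‖b‖) ^ (2 - p)
      = ‖a - b‖ ^ 2 * (‖a‖ + ‖b‖) ^ (p - 2) := by
    rw [show p - 2 = -(2 - p) by ring, Real.rpow_neg hab.le, div_eq_mul_inv]
  rw [ge_iff_le, hdiv]
  have v1 := plt2_vec_ineq p hp1 hp2 a b
  have v2 := plt2_vec_ineq p hp1 hp2 b a
  have hsymm : ⟪b, a⟫ = ⟪a, b⟫ := real_inner_comm _ _
  have hnrev : ‖b - a‖ = ‖a - b‖ := norm_sub_rev _ _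
  have hacomm : ‖b‖ + ‖a‖ = ‖a‖ + ‖b‖ := add_comm _ _
  rw [hnrev, hsymm, hacomm] at v2
  have m1 := mul_le_mul_of_nonneg_left v1 hUp.le
  have m2 := mul_le_mul_of_nonneg_left v2 hVp.le
  rw [hsymm]
  nlinarith [m1, m2]
end

section
/- With the notation of the previous statement: if $\gamma=\gamma_1$ and $\epsilon>0$, or if $\gamma=\gamma_2$ and $\epsilon<0$, then $h'(0)>0$; consequently there exists $\delta_h\in(0,1)$ such that $\tfrac12 h'(0)t\le h(t)\le 2h'(0)t$ for all $t\in(0,\delta_h)$. -/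
open Topology Filter Set


/-- `k(s) = (p-1)s² - (N-p)s`. -/
def kfun (N p s : ℝ) : ℝ := (p - 1) * s ^ 2 - (N - p) * s

/-- `h(t) = |γ-(γ-ε)t|^(p-2) [k(γ-ε)t - k(γ)] - μ|1-t|^(p-2)(1-t)`. -/
noncomputable def hfun (N p μ γ ε t : ℝ) : ℝ :=
  |γ - (γ - ε) * t| ^ (p - 2) * (kfun N p (γ - ε) * t - kfun N p γ) -
    μ * |1 - t| ^ (p - 2) * (1 - t)

theorem hfun_deriv_pos_and_comparison (N p μ γ₁ γ₂ γ ε : ℝ)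
    (hp : 1 < p) (hpN : p < N) (hμ0 : 0 < μ) (hμ : μ < ((N - p) / p) ^ p)
    (hroot₁ : rootEq N p μ γ₁) (hroot₂ : rootEq N p μ γ₂)
    (h₁pos : 0 < γ₁) (h₁ : γ₁ < (N - p) / p) (h₂ : (N - p) / p < γ₂)
    (hcase : (γ = γ₁ ∧ 0 < ε ∧ 0 < -p * γ + N - p + ε) ∨
             (γ = γ₂ ∧ ε < 0 ∧ -p * γ + N - p + ε < 0)) :
    0 < (p - 1) * γ ^ (p - 2) * (-p * γ + N - p + ε) * ε ∧
    ∃ δh : ℝ, 0 < δh ∧ δh < 1 ∧ ∀ t : ℝ, 0 < t → t < δh →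
      (1 / 2) * ((p - 1) * γ ^ (p - 2) * (-p * γ + N - p + ε) * ε) * t ≤ hfun N p μ γ ε t ∧
      hfun N p μ γ ε t ≤ 2 * ((p - 1) * γ ^ (p - 2) * (-p * γ + N - p + ε) * ε) * t := by
  have hp0 : (0:ℝ) < p := by linarith
  have hNp : (0:ℝ) < N - p := by linarith
  have hγpos : 0 < γ := by
    rcases hcase with ⟨h, _⟩ | ⟨h, _⟩
    · exact h ▸ h₁pos
    · have hq : 0 < (N - p) / p := div_pos hNp hp0
      subst h; linarith
  have hγne : γ ≠ 0 := ne_of_gt hγpos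
  have hroot : rootEq N p μ γ := by
    rcases hcase with ⟨h, _⟩ | ⟨h, _⟩ <;> subst h <;> assumption
  have e2pos : 0 < γ ^ (p - 2) := Real.rpow_pos_of_pos hγpos _
  set D := (p - 1) * γ ^ (p - 2) * (-p * γ + N - p + ε) * ε with hDdef
  have hD : 0 < D := by
    rcases hcase with ⟨_, hε, hs⟩ | ⟨_, hε, hs⟩
    · have h1 : 0 < (-p * γ + N - p + ε) * ε := mul_pos hs hε
      nlinarith [mul_pos (mul_pos (show (0:ℝ) < p - 1 by linarith) e2pos) h1]
    · have h1 : 0 < (-p * γ + N - p + ε) * ε := mul_pos_of_neg_of_neg hs hε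
      nlinarith [mul_pos (mul_pos (show (0:ℝ) < p - 1 by linarith) e2pos) h1]
  -- μ in terms of γ
  have hμ' : μ = -(γ ^ (p - 2) * kfun N p γ) := by
    unfold rootEq at hroot; unfold kfun; linarith
  set a := γ - ε with ha
  -- the smooth representative
  set F : ℝ → ℝ := fun t => (γ - a * t) ^ (p - 2) * (kfun N p a * t - kfun N p γ) -
    μ * (1 - t) ^ (p - 1) with hFdef
  have hlin : HasDerivAt (fun t : ℝ => γ - a * t) (-a) 0 := by
    simpa using ((hasDerivAt_id (0:ℝ)).const_mul a).const_sub γ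
  have h00 : γ - a * 0 = γ := by ring
  have hpow1 : HasDerivAt (fun t : ℝ => (γ - a * t) ^ (p - 2))
      ((p - 2) * γ ^ (p - 2 - 1) * (-a)) 0 := by
    have hg : HasDerivAt (fun x : ℝ => x ^ (p - 2)) ((p - 2) * γ ^ (p - 2 - 1))
        ((fun t : ℝ => γ - a * t) 0) := by
      simp only [h00]
      exact Real.hasDerivAt_rpow_const (Or.inl hγne)
    simpa [mul_assoc, Function.comp_def] using hg.comp 0 hlin
  have hlin2 : HasDerivAt (fun t : ℝ => kfun N p a * t - kfun N p γ) (kfun N p a) 0 := by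
    simpa using ((hasDerivAt_id (0:ℝ)).const_mul (kfun N p a)).sub_const (kfun N p γ)
  have hpart1 : HasDerivAt (fun t : ℝ => (γ - a * t) ^ (p - 2) * (kfun N p a * t - kfun N p γ))
      ((p - 2) * γ ^ (p - 2 - 1) * (-a) * (kfun N p a * 0 - kfun N p γ) +
        (γ - a * 0) ^ (p - 2) * kfun N p a) 0 := hpow1.mul hlin2
  have hlin3 : HasDerivAt (fun t : ℝ => 1 - t) (-1) 0 := by
    simpa using (hasDerivAt_id (0:ℝ)).const_sub 1
  have hpow2 : HasDerivAt (fun t : ℝ => (1 - t) ^ (p - 1))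
      ((p - 1) * (1:ℝ) ^ (p - 1 - 1) * (-1)) 0 := by
    have hg : HasDerivAt (fun x : ℝ => x ^ (p - 1)) ((p - 1) * (1:ℝ) ^ (p - 1 - 1))
        ((fun t : ℝ => 1 - t) 0) := by
      simp only [sub_zero]
      exact Real.hasDerivAt_rpow_const (Or.inl one_ne_zero)
    simpa [mul_assoc, Function.comp_def] using hg.comp 0 hlin3
  have hF : HasDerivAt F
      ((p - 2) * γ ^ (p - 2 - 1) * (-a) * (kfun N p a * 0 - kfun N p γ) +
        (γ - a * 0) ^ (p - 2) * kfun N p a -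
        μ * ((p - 1) * (1:ℝ) ^ (p - 1 - 1) * (-1))) 0 :=
    hpart1.sub (hpow2.const_mul μ)
  -- hfun agrees with F near 0
  have hev1 : ∀ᶠ t in 𝓝 (0:ℝ), 0 < γ - a * t := by
    have hc : Filter.Tendsto (fun t : ℝ => γ - a * t) (𝓝 0) (𝓝 γ) := by
      have := hlin.continuousAt
      rwa [ContinuousAt, h00] at this
    exact hc.eventually (eventually_gt_nhds hγpos)
  have hev2 : ∀ᶠ t in 𝓝 (0:ℝ), 0 < 1 - t := by
    have hc : Filter.Tendsto (fun t : ℝ => 1 - t) (𝓝 0) (𝓝 1) := by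
      have := hlin3.continuousAt
      rwa [ContinuousAt, sub_zero] at this
    exact hc.eventually (eventually_gt_nhds one_pos)
  have heq : hfun N p μ γ ε =ᶠ[𝓝 (0:ℝ)] F := by
    filter_upwards [hev1, hev2] with t h1 h2
    unfold hfun
    simp only [hFdef]
    rw [← ha, abs_of_pos h1, abs_of_pos h2,
      show p - 1 = p - 2 + 1 by ring, Real.rpow_add_one (ne_of_gt h2)]
    ring
  have hsplit : γ ^ (p - 2 - 1) * γ = γ ^ (p - 2) := by
    rw [← Real.rpow_add_one hγne (p - 2 - 1)]
    congr 1
    ring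
  have hF' : HasDerivAt (hfun N p μ γ ε) D 0 := by
    have h := hF.congr_of_eventuallyEq heq
    refine h.congr_deriv ?_
    rw [hDdef, hμ', h00, ← hsplit]
    unfold kfun
    rw [Real.one_rpow, ha]
    ring
  have h0 : hfun N p μ γ ε 0 = 0 := by
    unfold hfun
    rw [mul_zero, sub_zero, mul_zero, sub_zero, abs_of_pos hγpos, abs_one, Real.one_rpow,
      mul_one, mul_one, hμ']
    ring
  refine ⟨hD, ?_⟩
  have hslope := hasDerivAt_iff_tendsto_slope.mp hF'
  have hslope' : Filter.Tendsto (slope (hfun N p μ γ ε) 0) (𝓝[>] (0:ℝ)) (𝓝 D) :=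
    hslope.mono_left (nhdsWithin_mono 0 (fun x hx => by
      simp only [Set.mem_compl_iff, Set.mem_singleton_iff]
      exact ne_of_gt hx))
  have hmem : Set.Ioo (D / 2) (2 * D) ∈ 𝓝 D := Ioo_mem_nhds (by linarith) (by linarith)
  have hev : ∀ᶠ t in 𝓝[>] (0:ℝ), slope (hfun N p μ γ ε) 0 t ∈ Set.Ioo (D / 2) (2 * D) :=
    hslope' hmem
  rw [eventually_nhdsWithin_iff, Metric.eventually_nhds_iff] at hev
  obtain ⟨δ, hδpos, hδ⟩ := hev
  refine ⟨min δ (1 / 2), lt_min hδpos (by norm_num),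
    lt_of_le_of_lt (min_le_right _ _) (by norm_num), ?_⟩
  intro t ht htδ
  have hdist : dist t 0 < δ := by
    rw [Real.dist_eq, sub_zero, abs_of_pos ht]
    exact lt_of_lt_of_le htδ (min_le_left _ _)
  have h1 := hδ hdist (Set.mem_Ioi.mpr ht)
  rw [slope_def_field, h0, sub_zero, sub_zero] at h1
  obtain ⟨hlo, hhi⟩ := h1
  constructor
  · have := (lt_div_iff₀ ht).mp hlo
    linarith
  · have := (div_lt_iff₀ ht).mp hhi
    linarith
end

section
/- Let $1<p<N$, $0\le\mu<\bar\mu=((N-p)/p)^p$ and let $\gamma_1<\gamma_2$ be the nonnegative roots of $\gamma^{p-2}[(p-1)\gamma^2-(N-p)\gamma]+\mu=0$. Then for every $s$ with $\frac{N-p}{p\gamma_2}<s<\frac{N-p}{p\gamma_1}$ (interpreting the upper bound as $+\infty$ if $\gamma_1=0$), one has $\frac{p(s-1)+1}{s^p}>\frac{\mu}{\bar\mu}$. -/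
lemma aux_hasDerivAt (N p t : ℝ) (ht : 0 < t) :
    HasDerivAt (fun t : ℝ => (N - p) * t ^ (p - 1) - (p - 1) * t ^ p)
      ((p - 1) * t ^ (p - 2) * ((N - p) - p * t)) t := by
  have h1 := (Real.hasDerivAt_rpow_const (x := t) (p := p - 1) (Or.inl ht.ne')).const_mul (N - p)
  have h2 := (Real.hasDerivAt_rpow_const (x := t) (p := p) (Or.inl ht.ne')).const_mul (p - 1)
  have h := h1.sub h2
  refine h.congr_deriv ?_
  have e1 : t ^ (p - 1) = t ^ (p - 2) * t := by
    rw [show p - 1 = p - 2 + 1 by ring, Real.rpow_add_one ht.ne']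
  have e2 : p - 1 - 1 = p - 2 := by ring
  rw [e2, e1]; ring

lemma aux_root_val {N p μ γ : ℝ} (hγ : 0 < γ) (h : rootEq N p μ γ) :
    (N - p) * γ ^ (p - 1) - (p - 1) * γ ^ p = μ := by
  unfold rootEq at h
  have e1 : γ ^ (p - 2) * γ = γ ^ (p - 1) := by
    rw [show p - 1 = p - 2 + 1 by ring, Real.rpow_add_one hγ.ne']
  have e2 : γ ^ (p - 1) * γ = γ ^ p := by
    rw [show p = p - 1 + 1 by ring, Real.rpow_add_one hγ.ne']
    rw [show p - 1 + 1 = p by ring]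
  linear_combination (-1) * h + ((p - 1) * γ - (N - p)) * e1 + (p - 1) * e2

lemma aux_mono (N p : ℝ) (hp : 1 < p) (hpN : p < N) :
    StrictMonoOn (fun t : ℝ => (N - p) * t ^ (p - 1) - (p - 1) * t ^ p)
      (Set.Icc 0 ((N - p) / p)) := by
  have hp0 : (0:ℝ) < p := by linarith
  apply strictMonoOn_of_deriv_pos (convex_Icc _ _)
  · intro x hx
    apply ContinuousAt.continuousWithinAt
    apply ContinuousAt.sub
    · exact continuousAt_const.mul (Real.continuousAt_rpow_const x (p - 1)
        (by rcases eq_or_ne x 0 with h | h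
            · exact Or.inr (by linarith)
            · exact Or.inl h))
    · exact continuousAt_const.mul (Real.continuousAt_rpow_const x p
        (by rcases eq_or_ne x 0 with h | h
            · exact Or.inr (by linarith)
            · exact Or.inl h))
  · rw [interior_Icc]
    intro x hx
    rw [(aux_hasDerivAt N p x hx.1).deriv]
    have h1 : (0:ℝ) < x ^ (p - 2) := Real.rpow_pos_of_pos hx.1 _
    have h2 : 0 < (N - p) - p * x := by
      have := hx.2
      have : p * x < p * ((N - p) / p) := by nlinarith
      rw [mul_div_cancel₀ _ hp0.ne'] at this
      linarith
    have h3 : 0 < p - 1 := by linarith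
    exact mul_pos (mul_pos h3 h1) h2

lemma aux_anti (N p : ℝ) (hp : 1 < p) (hpN : p < N) :
    StrictAntiOn (fun t : ℝ => (N - p) * t ^ (p - 1) - (p - 1) * t ^ p)
      (Set.Ici ((N - p) / p)) := by
  have hp0 : (0:ℝ) < p := by linarith
  have hm : 0 < (N - p) / p := div_pos (by linarith) hp0
  apply strictAntiOn_of_deriv_neg (convex_Ici _)
  · intro x hx
    have hx0 : 0 < x := lt_of_lt_of_le hm hx
    apply ContinuousAt.continuousWithinAt
    exact (continuousAt_const.mul (Real.continuousAt_rpow_const x (p - 1) (Or.inl hx0.ne'))).sub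
      (continuousAt_const.mul (Real.continuousAt_rpow_const x p (Or.inl hx0.ne')))
  · rw [interior_Ici]
    intro x hx
    have hx0 : 0 < x := lt_trans hm hx
    rw [(aux_hasDerivAt N p x hx0).deriv]
    have h1 : (0:ℝ) < x ^ (p - 2) := Real.rpow_pos_of_pos hx0 _
    have hxm : (N - p) / p < x := hx
    have h2 : (N - p) - p * x < 0 := by
      have : p * ((N - p) / p) < p * x := mul_lt_mul_of_pos_left hxm hp0
      rw [mul_div_cancel₀ _ hp0.ne'] at this
      linarith
    have h3 : (0:ℝ) < p - 1 := by linarith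
    have := mul_pos (mul_pos h3 h1) (by linarith : (0:ℝ) < p * x - (N - p))
    nlinarith

theorem s_interval_ineq (N p μ γ₁ γ₂ : ℝ)
    (hp : 1 < p) (hpN : p < N) (hμ0 : 0 ≤ μ) (hμ : μ < ((N - p) / p) ^ p)
    (hroot₁ : rootEq N p μ γ₁) (hroot₂ : rootEq N p μ γ₂)
    (h₁0 : 0 ≤ γ₁) (h₁ : γ₁ < (N - p) / p) (h₂ : (N - p) / p < γ₂)
    (h₂' : γ₂ ≤ (N - p) / (p - 1)) :
    ∀ s : ℝ, (N - p) / (p * γ₂) < s → (γ₁ = 0 ∨ s < (N - p) / (p * γ₁)) →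
      (p * (s - 1) + 1) / s ^ p > μ / ((N - p) / p) ^ p := by
  intro s hs1 hs2
  have hp0 : (0:ℝ) < p := by linarith
  have hp1 : (0:ℝ) < p - 1 := by linarith
  have hNp : (0:ℝ) < N - p := by linarith
  set m : ℝ := (N - p) / p with hm_def
  have hm : 0 < m := by positivity
  have hγ₂0 : 0 < γ₂ := lt_trans hm h₂
  have hs : 0 < s := lt_trans (by positivity) hs1
  set t : ℝ := (N - p) / (p * s) with ht_def
  have ht : 0 < t := by positivity
  have hpM : p * m = N - p := by
    rw [hm_def]; field_simp
  have hts : t * s = m := by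
    rw [ht_def, hm_def]; field_simp
  -- t < γ₂
  have htγ₂ : t < γ₂ := by
    rw [ht_def, div_lt_iff₀ (by positivity)]
    rw [div_lt_iff₀ (by positivity)] at hs1
    nlinarith
  set G : ℝ → ℝ := fun t : ℝ => (N - p) * t ^ (p - 1) - (p - 1) * t ^ p with hG_def
  -- key inequality : μ < G t
  have key : μ < G t := by
    rcases le_total t m with hcase | hcase
    · -- increasing part : compare with γ₁
      rcases hs2 with h0 | hlt
      · -- γ₁ = 0, so μ = 0
        have hμz : μ = 0 := by
          have := hroot₁
          rw [rootEq, h0] at this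
          simpa using this
        have e2 : t ^ p = t ^ (p - 1) * t := by
          rw [← Real.rpow_add_one ht.ne' (p - 1)]; norm_num
        have h1 : (0:ℝ) < t ^ (p - 1) := Real.rpow_pos_of_pos ht _
        have h2 : 0 < (N - p) - (p - 1) * t := by
          have hle : (p - 1) * t ≤ (p - 1) * m := by nlinarith
          have hmlt : (p - 1) * m < N - p := by nlinarith [hpM, hm]
          linarith
        rw [hμz, hG_def]
        simp only
        rw [e2]
        nlinarith
      · -- γ₁ > 0 and γ₁ < t
        have hγ₁pos : 0 < γ₁ := by
          rcases lt_or_eq_of_le h₁0 with h | h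
          · exact h
          · exfalso
            rw [← h, mul_zero, div_zero] at hlt
            linarith
        have hγ₁t : γ₁ < t := by
          rw [ht_def, lt_div_iff₀ (by positivity)]
          rw [lt_div_iff₀ (by positivity)] at hlt
          nlinarith
        have := aux_mono N p hp hpN (Set.mem_Icc.mpr ⟨h₁0, by linarith⟩)
          (Set.mem_Icc.mpr ⟨ht.le, hcase⟩) hγ₁t
        have hval := aux_root_val hγ₁pos hroot₁
        rw [hG_def]
        simp only at this ⊢
        linarith [hval ▸ this]
    · -- decreasing part : compare with γ₂
      have := aux_anti N p hp hpN (Set.mem_Ici.mpr hcase)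
        (Set.mem_Ici.mpr h₂.le) htγ₂
      have hval := aux_root_val hγ₂0 hroot₂
      rw [hG_def]
      simp only at this ⊢
      linarith [hval ▸ this]
  -- now conclude
  have hsp : (0:ℝ) < s ^ p := Real.rpow_pos_of_pos hs _
  have hmp : (0:ℝ) < m ^ p := Real.rpow_pos_of_pos hm _
  rw [gt_iff_lt, div_lt_div_iff₀ hmp hsp]
  have hA : t ^ p * s ^ p = m ^ p := by
    rw [← Real.mul_rpow ht.le hs.le, hts]
  have hB : t ^ (p - 1) * s ^ (p - 1) = m ^ (p - 1) := by
    rw [← Real.mul_rpow ht.le hs.le, hts]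
  have e1 : s ^ p = s ^ (p - 1) * s := by
    rw [← Real.rpow_add_one hs.ne' (p - 1)]; norm_num
  have e2 : m ^ p = m ^ (p - 1) * m := by
    rw [← Real.rpow_add_one hm.ne' (p - 1)]; norm_num
  have h1 : μ * s ^ p < G t * s ^ p := mul_lt_mul_of_pos_right key hsp
  have h2 : G t * s ^ p = (p * (s - 1) + 1) * m ^ p := by
    rw [hG_def]
    simp only
    calc ((N - p) * t ^ (p - 1) - (p - 1) * t ^ p) * s ^ p
        = (N - p) * (t ^ (p - 1) * s ^ (p - 1)) * s - (p - 1) * (t ^ p * s ^ p) := by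
          rw [e1]; ring
      _ = (N - p) * m ^ (p - 1) * s - (p - 1) * m ^ p := by rw [hA, hB]
      _ = (p * (s - 1) + 1) * m ^ p := by
          rw [e2, ← hpM]; ring
  linarith
end
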